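/- arXiv:2307.04017 — 3 statements merged into one kernel-verified Lean document; each statement's English description precedes it below -/
import Mathlib

section
/- Let m ∈ ℕ, h = (h_1,…,h_d) ∈ ℤ^d, and suppose the Korobov cubature formula P_m(f,h) := m^{−1} Σ_{ν=1}^m f(w^ν), with nodes w^ν := (2π{νh_1/m}, …, 2π{νh_d/m}), is exact on 𝒯(Γ(N,d)), i.e. P_m(f,h) = (2π)^{−d} ∫_{𝕋^d} f dx for all f ∈ 𝒯(Γ(N,d)). Let ℓ ∈ ℕ be the largest natural number satisfying 2^ℓ ≤ 3^{−d}·N. Then for any s ∈ ℕ^d with ‖s‖₁ ≤ ℓ and any f ∈ 𝒯(R(s)): f(x) = (2π)^{−d} ∫_{𝕋^d} f(y) 𝒱_{2^s}(x − y) dy = m^{−1} Σ_{ν=1}^m f(w^ν) 𝒱_{2^s}(x − w^ν) for all x ∈ 𝕋^d. -/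
noncomputable section
open scoped BigOperators
open MeasureTheory

/-- The cube `[0, 2π]^d`, representing the torus `𝕋^d`. -/
def cube (d : ℕ) : Set (Fin d → ℝ) := Set.Icc 0 (fun _ => 2 * Real.pi)

/-- Uniform norm over the torus `𝕋^d = [0, 2π]^d`. -/
def unifNorm {d : ℕ} (f : (Fin d → ℝ) → ℂ) : ℝ :=
  ⨆ x : cube d, ‖f ↑x‖

/-- The exponential `e^{i(k,x)}`. -/
def expFun {d : ℕ} (k : Fin d → ℤ) : (Fin d → ℝ) → ℂ :=
  fun x => Complex.exp (Complex.I * ∑ j, (k j : ℂ) * (x j : ℂ))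

/-- `𝒯(Q)`: the space of trigonometric polynomials with frequencies in `Q`. -/
def trigSpace {d : ℕ} (Q : Finset (Fin d → ℤ)) : Submodule ℂ ((Fin d → ℝ) → ℂ) :=
  Submodule.span ℂ (expFun '' (Q : Set (Fin d → ℤ)))

/-- `R(s) = {k : |k_j| < 2^{s_j}}`. -/
def Rbox {d : ℕ} (s : Fin d → ℕ) : Finset (Fin d → ℤ) :=
  Fintype.piFinset fun j => Finset.Ioo (-(2 ^ (s j) : ℤ)) ((2 : ℤ) ^ (s j))

/-- Best uniform approximation `d(f, 𝒯(Q))_∞`. -/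
def distT {d : ℕ} (f : (Fin d → ℝ) → ℂ) (Q : Finset (Fin d → ℤ)) : ℝ :=
  ⨅ u : trigSpace Q, unifNorm (f - (u : (Fin d → ℝ) → ℂ))

/-- `2π`-periodicity in each variable. -/
def Periodic2Pi {d : ℕ} (f : (Fin d → ℝ) → ℂ) : Prop :=
  ∀ (x : Fin d → ℝ) (j : Fin d), f (x + (2 * Real.pi) • (Pi.single j 1 : Fin d → ℝ)) = f x

/-- The Fibonacci numbers `b_0 = b_1 = 1`, `b_n = b_{n-1} + b_{n-2}`. -/
def fibb : ℕ → ℕ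
  | 0 => 1
  | 1 => 1
  | n + 2 => fibb (n + 1) + fibb n

/-- The hyperbolic cross `Γ(N, d)`. -/
def hyperCross (d N : ℕ) : Finset (Fin d → ℤ) :=
  (Fintype.piFinset fun _ : Fin d => Finset.Icc (-(N : ℤ)) (N : ℤ)).filter
    fun k => (∏ j, max |k j| 1) ≤ (N : ℤ)

/-- The Fibonacci points `y^ν = (2πν/b_n, 2π{ν b_{n-1}/b_n})`. -/
def fibPoint (n ν : ℕ) : Fin 2 → ℝ :=
  ![2 * Real.pi * ν / fibb n, 2 * Real.pi * Int.fract ((↑(ν * fibb (n - 1)) : ℝ) / fibb n)]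

/-- The Dirichlet kernel `𝒟_l`. -/
def dirichletK (l : ℕ) (x : ℝ) : ℂ :=
  ∑ k ∈ Finset.Icc (-(l : ℤ)) (l : ℤ), Complex.exp (Complex.I * (k : ℂ) * (x : ℂ))

/-- The de la Vallée Poussin kernel `𝒱_j`. -/
def vpK (j : ℕ) (x : ℝ) : ℂ := (j : ℂ)⁻¹ * ∑ l ∈ Finset.Ico j (2 * j), dirichletK l x

/-- The multivariate de la Vallée Poussin kernel `𝒱_{(j_1,…,j_d)}`. -/
def vpKd {d : ℕ} (j : Fin d → ℕ) (x : Fin d → ℝ) : ℂ := ∏ i, vpK (j i) (x i)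

/-- The Korobov points `w^ν = (2π{νh_1/m}, …, 2π{νh_d/m})`. -/
def korNode (m : ℕ) {d : ℕ} (h : Fin d → ℤ) (ν : ℕ) : Fin d → ℝ :=
  fun i => 2 * Real.pi * Int.fract ((ν : ℝ) * (h i : ℝ) / (m : ℝ))

/-! ### Auxiliary lemmas -/

open Complex in
lemma int_exp (n : ℤ) : ∫ y in Set.Icc (0:ℝ) (2*Real.pi), Complex.exp (Complex.I * n * y)
    = if n = 0 then ((2*Real.pi : ℝ) : ℂ) else 0 := by
  rw [MeasureTheory.integral_Icc_eq_integral_Ioc,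
    ← intervalIntegral.integral_of_le (by positivity : (0:ℝ) ≤ 2*Real.pi)]
  by_cases hn : n = 0
  · simp [hn]
  · simp only [hn, if_false]
    have hc : (Complex.I * n) ≠ 0 := by
      simp [Complex.I_ne_zero, Complex.ext_iff, hn]
    have := integral_exp_mul_complex (a := 0) (b := 2*Real.pi) hc
    simp only [mul_assoc] at this ⊢
    rw [this]
    rw [show ((2*Real.pi : ℝ):ℂ) = (2*Real.pi : ℂ) by push_cast; ring]
    rw [show Complex.I * ((n:ℂ) * (2*Real.pi : ℂ)) = (n:ℂ) * (2*Real.pi*Complex.I) by ring]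
    simp [Complex.exp_int_mul_two_pi_mul_I]

/-- The coefficients of the de la Vallée Poussin kernel. -/
def cJ (j : ℕ) (t : ℤ) : ℂ :=
  (j : ℂ)⁻¹ * (((Finset.Ico j (2*j)).filter fun l : ℕ => |t| ≤ (l:ℤ)).card : ℂ)

lemma vpK_expand (j : ℕ) (x : ℝ) :
    vpK j x = ∑ t ∈ Finset.Icc (-(2*(j:ℤ))+1) (2*(j:ℤ)-1),
      cJ j t * Complex.exp (Complex.I * t * x) := by
  unfold vpK
  have hsub : ∀ l ∈ Finset.Ico j (2*j),
      dirichletK l x = ∑ t ∈ Finset.Icc (-(2*(j:ℤ))+1) (2*(j:ℤ)-1),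
        if |t| ≤ (l:ℤ) then Complex.exp (Complex.I * t * x) else 0 := by
    intro l hl
    rw [Finset.mem_Ico] at hl
    unfold dirichletK
    have hset : Finset.Icc (-(l:ℤ)) (l:ℤ)
        = (Finset.Icc (-(2*(j:ℤ))+1) (2*(j:ℤ)-1)).filter (fun t => |t| ≤ (l:ℤ)) := by
      ext t
      simp only [Finset.mem_Icc, Finset.mem_filter, abs_le]
      have h1 : (l:ℤ) < 2*(j:ℤ) := by exact_mod_cast hl.2
      have h2 : (j:ℤ) ≤ (l:ℤ) := by exact_mod_cast hl.1
      omega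
    rw [hset, Finset.sum_filter]
  rw [Finset.sum_congr rfl hsub, Finset.sum_comm, Finset.mul_sum]
  apply Finset.sum_congr rfl
  intro t _
  rw [← Finset.sum_filter, Finset.sum_const]
  unfold cJ
  ring

lemma cJ_eq_one (j : ℕ) (hj : 0 < j) (t : ℤ) (ht : |t| < (j:ℤ)) : cJ j t = 1 := by
  unfold cJ
  have h : (Finset.Ico j (2*j)).filter (fun l : ℕ => |t| ≤ (l:ℤ)) = Finset.Ico j (2*j) := by
    apply Finset.filter_true_of_mem
    intro l hl
    rw [Finset.mem_Ico] at hl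
    have : (j:ℤ) ≤ (l:ℤ) := by exact_mod_cast hl.1
    omega
  rw [h, Nat.card_Ico]
  have hj' : (j:ℂ) ≠ 0 := by exact_mod_cast hj.ne'
  rw [show 2*j - j = j by omega]
  field_simp

lemma oneD (j : ℕ) (hj : 0 < j) (k : ℤ) (hk : |k| < (j:ℤ)) (x : ℝ) :
    ∫ y in Set.Icc (0:ℝ) (2*Real.pi),
      Complex.exp (Complex.I * k * y) * vpK j (x - y)
      = ((2*Real.pi : ℝ) : ℂ) * Complex.exp (Complex.I * k * x) := by
  have key : ∀ y : ℝ, Complex.exp (Complex.I * k * y) * vpK j (x - y)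
      = ∑ t ∈ Finset.Icc (-(2*(j:ℤ))+1) (2*(j:ℤ)-1),
        (cJ j t * Complex.exp (Complex.I * t * x)) * Complex.exp (Complex.I * (k - t) * y) := by
    intro y
    rw [vpK_expand, Finset.mul_sum]
    apply Finset.sum_congr rfl
    intro t _
    have e1 : Complex.exp (Complex.I*(k:ℂ)*(y:ℝ)) * (cJ j t * Complex.exp (Complex.I*(t:ℂ)*((x-y:ℝ):ℂ)))
        = cJ j t * Complex.exp (Complex.I*(k:ℂ)*(y:ℝ) + Complex.I*(t:ℂ)*((x-y:ℝ):ℂ)) := by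
      rw [Complex.exp_add]; ring
    have e2 : cJ j t * Complex.exp (Complex.I*(t:ℂ)*(x:ℝ)) * Complex.exp (Complex.I*((k:ℂ)-(t:ℂ))*(y:ℝ))
        = cJ j t * Complex.exp (Complex.I*(t:ℂ)*(x:ℝ) + Complex.I*((k:ℂ)-(t:ℂ))*(y:ℝ)) := by
      rw [Complex.exp_add]; ring
    rw [e1, e2]
    congr 2
    push_cast
    ring
  simp_rw [key]
  rw [MeasureTheory.integral_finset_sum]
  · have hmem : k ∈ Finset.Icc (-(2*(j:ℤ))+1) (2*(j:ℤ)-1) := by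
      have := abs_lt.mp hk
      rw [Finset.mem_Icc]; omega
    rw [Finset.sum_eq_single_of_mem k hmem]
    · have h0 := int_exp (k - k)
      push_cast at h0
      rw [MeasureTheory.integral_const_mul, h0]
      rw [cJ_eq_one j hj k hk]
      simp
      ring
    · intro t ht hne
      have h0 := int_exp (k - t)
      rw [if_neg (by omega : ¬ k - t = 0)] at h0
      push_cast at h0
      rw [MeasureTheory.integral_const_mul, h0, mul_zero]
  · intro t _
    apply MeasureTheory.Integrable.const_mul
    apply ContinuousOn.integrableOn_compact isCompact_Icc
    fun_prop

lemma integral_cube_prod {d : ℕ} (F : Fin d → ℝ → ℂ) :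
    ∫ y in cube d, ∏ i, F i (y i) = ∏ i, ∫ t in Set.Icc (0:ℝ) (2*Real.pi), F i t := by
  have hcube : MeasurableSet (cube d) := measurableSet_Icc
  rw [← MeasureTheory.integral_indicator hcube]
  have hind : ∀ y : Fin d → ℝ, (cube d).indicator (fun y => ∏ i, F i (y i)) y
      = ∏ i, (Set.Icc (0:ℝ) (2*Real.pi)).indicator (F i) (y i) := by
    intro y
    by_cases hy : y ∈ cube d
    · rw [Set.indicator_of_mem hy]
      rw [cube, Set.Icc, Set.mem_setOf_eq] at hy
      apply Finset.prod_congr rfl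
      intro i _
      rw [Set.indicator_of_mem]
      exact Set.mem_Icc.mpr ⟨hy.1 i, hy.2 i⟩
    · rw [Set.indicator_of_notMem hy]
      rw [cube, Set.Icc, Set.mem_setOf_eq] at hy
      push_neg at hy
      have : ∃ i, y i ∉ Set.Icc (0:ℝ) (2*Real.pi) := by
        by_contra hc
        push_neg at hc
        exact hy (fun i => (hc i).1) (fun i => (hc i).2)
      obtain ⟨i, hi⟩ := this
      exact (Finset.prod_eq_zero (Finset.mem_univ i) (Set.indicator_of_notMem hi _)).symm
  simp_rw [hind]
  rw [MeasureTheory.integral_fintype_prod_volume_eq_prod]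
  exact Finset.prod_congr rfl fun i _ => MeasureTheory.integral_indicator measurableSet_Icc

lemma cont_vpK (j : ℕ) : Continuous (vpK j) := by
  unfold vpK dirichletK
  fun_prop

lemma cont_expFun {d : ℕ} (k : Fin d → ℤ) : Continuous (expFun k) := by
  unfold expFun
  fun_prop

lemma trig_continuous {d : ℕ} {Q : Finset (Fin d → ℤ)} {f : (Fin d → ℝ) → ℂ}
    (hf : f ∈ trigSpace Q) : Continuous f := by
  induction hf using Submodule.span_induction with
  | mem g hg => obtain ⟨k, _, rfl⟩ := hg; exact cont_expFun k
  | zero => exact continuous_const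
  | add g₁ g₂ _ _ h1 h2 => exact h1.add h2
  | smul c g _ h => exact h.const_smul c

/-- reproducing property (I) of the Korobov point set via the de la
Vallée Poussin kernels (Theorem CT1 (I)). -/
theorem stmt14 (d m N : ℕ) (hd : 0 < d) (hm : 0 < m) (h : Fin d → ℤ)
    (hex : ∀ f ∈ trigSpace (hyperCross d N),
      (m : ℂ)⁻¹ * ∑ ν ∈ Finset.Icc 1 m, f (korNode m h ν) =
        (((2 * Real.pi) ^ d : ℝ) : ℂ)⁻¹ * ∫ x in cube d, f x)
    (ℓ : ℕ) (hℓ : IsGreatest {k : ℕ | (2 : ℝ) ^ k ≤ ((3 : ℝ) ^ d)⁻¹ * N} ℓ)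
    (s : Fin d → ℕ) (hs : (∑ j, s j) ≤ ℓ)
    (f : (Fin d → ℝ) → ℂ) (hf : f ∈ trigSpace (Rbox s)) (x : Fin d → ℝ) :
    f x = (((2 * Real.pi) ^ d : ℝ) : ℂ)⁻¹ *
        (∫ y in cube d, f y * vpKd (fun i => 2 ^ s i) (x - y)) ∧
    f x = (m : ℂ)⁻¹ * ∑ ν ∈ Finset.Icc 1 m,
        f (korNode m h ν) * vpKd (fun i => 2 ^ s i) (x - korNode m h ν) := by
  classical
  have hπ : (0:ℝ) < 2 * Real.pi := by positivity
  set c : ℂ := (((2 * Real.pi) ^ d : ℝ) : ℂ) with hc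
  -- continuity of the kernel
  have contK : Continuous (fun y : Fin d → ℝ => vpKd (fun i => 2 ^ s i) (x - y)) := by
    unfold vpKd
    refine continuous_finset_prod _ fun i _ => ?_
    exact (cont_vpK _).comp ((continuous_apply i).comp (continuous_const.sub continuous_id))
  have hcompact : IsCompact (cube d) := isCompact_Icc
  have hinteg : ∀ g : (Fin d → ℝ) → ℂ, Continuous g →
      MeasureTheory.IntegrableOn (fun y => g y * vpKd (fun i => 2 ^ s i) (x - y)) (cube d) :=
    fun g hg => ContinuousOn.integrableOn_compact hcompact ((hg.mul contK).continuousOn)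
  -- expFun as a product
  have expFun_eq_prod : ∀ (k : Fin d → ℤ) (y : Fin d → ℝ),
      expFun k y = ∏ j, Complex.exp (Complex.I * (k j : ℂ) * (y j : ℂ)) := by
    intro k y
    rw [expFun, ← Complex.exp_sum]
    congr 1
    rw [Finset.mul_sum]
    exact Finset.sum_congr rfl fun j _ => by ring
  -- Part I for generators
  have eq1_gen : ∀ k ∈ Rbox s, expFun k x =
      c⁻¹ * ∫ y in cube d, expFun k y * vpKd (fun i => 2 ^ s i) (x - y) := by
    intro k hk
    rw [Rbox, Fintype.mem_piFinset] at hk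
    have hprod : (fun y : Fin d → ℝ => expFun k y * vpKd (fun i => 2 ^ s i) (x - y))
        = fun y => ∏ i, (fun u : ℝ =>
            Complex.exp (Complex.I * (k i : ℂ) * (u : ℂ)) * vpK (2 ^ s i) (x i - u)) (y i) := by
      funext y
      rw [expFun_eq_prod, vpKd, ← Finset.prod_mul_distrib]
      exact Finset.prod_congr rfl fun i _ => rfl
    have hcne : c ≠ 0 := by
      rw [hc]
      exact_mod_cast pow_ne_zero d (by positivity : (2*Real.pi:ℝ) ≠ 0)
    calc expFun k x = c⁻¹ * (c * expFun k x) := by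
          field_simp
      _ = c⁻¹ * ∫ y in cube d, expFun k y * vpKd (fun i => 2 ^ s i) (x - y) := by
          congr 1
          rw [hprod, integral_cube_prod (fun i u =>
            Complex.exp (Complex.I * (k i : ℂ) * (u:ℂ)) * vpK (2 ^ s i) (x i - u))]
          have hone : ∀ i : Fin d, (∫ u in Set.Icc (0:ℝ) (2*Real.pi),
              Complex.exp (Complex.I * (k i : ℂ) * (u : ℂ)) * vpK (2 ^ s i) (x i - u))
              = ((2*Real.pi : ℝ) : ℂ) * Complex.exp (Complex.I * (k i : ℂ) * (x i : ℂ)) := by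
            intro i
            apply oneD (2 ^ s i) (pow_pos (by norm_num) _) (k i) _ (x i)
            have := hk i
            rw [Finset.mem_Ioo] at this
            have habs := abs_lt.mpr ⟨this.1, this.2⟩
            push_cast
            exact habs
          rw [Finset.prod_congr rfl fun i _ => hone i, Finset.prod_mul_distrib,
            Finset.prod_const, Finset.card_univ, Fintype.card_fin, ← expFun_eq_prod, hc]
          push_cast
          ring
  -- Part I in general
  have heq1 : ∀ g ∈ trigSpace (Rbox s), g x =
      c⁻¹ * ∫ y in cube d, g y * vpKd (fun i => 2 ^ s i) (x - y) := by
    intro g hg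
    induction hg using Submodule.span_induction with
    | mem g hg => obtain ⟨k, hk, rfl⟩ := hg; exact eq1_gen k hk
    | zero => simp
    | add g₁ g₂ hg₁ hg₂ h1 h2 =>
      have c₁ : Continuous g₁ := trig_continuous (Q := Rbox s) hg₁
      have c₂ : Continuous g₂ := trig_continuous (Q := Rbox s) hg₂
      have : (fun y => (g₁ + g₂) y * vpKd (fun i => 2 ^ s i) (x - y))
          = fun y => g₁ y * vpKd (fun i => 2 ^ s i) (x - y)
              + g₂ y * vpKd (fun i => 2 ^ s i) (x - y) := by
        funext y; simp [add_mul]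
      rw [Pi.add_apply, h1, h2, this, MeasureTheory.integral_add (hinteg g₁ c₁) (hinteg g₂ c₂)]
      ring
    | smul a g hg hgx =>
      have : (fun y => (a • g) y * vpKd (fun i => 2 ^ s i) (x - y))
          = fun y => a • (g y * vpKd (fun i => 2 ^ s i) (x - y)) := by
        funext y; simp [smul_eq_mul]; ring
      rw [Pi.smul_apply, hgx, this, MeasureTheory.integral_smul, smul_eq_mul, smul_eq_mul]
      ring
  -- numeric bound
  have hbound : ((3:ℤ)^d * 2^(∑ j, s j)) ≤ (N:ℤ) := by
    have h1 : (2:ℝ)^(∑ j, s j) ≤ (2:ℝ)^ℓ := by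
      apply pow_le_pow_right₀ (by norm_num) hs
    have h2 : (2:ℝ)^ℓ ≤ ((3:ℝ)^d)⁻¹ * N := hℓ.1
    have h3d : (0:ℝ) < 3^d := by positivity
    have h3 : (3:ℝ)^d * 2^(∑ j, s j) ≤ N := by
      calc (3:ℝ)^d * 2^(∑ j, s j) ≤ (3:ℝ)^d * ((3^d)⁻¹ * N) := by nlinarith
        _ = N := by field_simp
    exact_mod_cast h3
  -- the index set of the kernel expansion
  set T : Finset (Fin d → ℤ) := Fintype.piFinset fun i : Fin d =>
    Finset.Icc (-(2*(((2:ℕ) ^ s i : ℕ):ℤ))+1) (2*(((2:ℕ) ^ s i : ℕ):ℤ)-1) with hT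
  -- frequencies land in the hyperbolic cross
  have memHC : ∀ k ∈ Rbox s, ∀ t ∈ T, (fun i => k i - t i) ∈ hyperCross d N := by
    intro k hk t ht
    rw [Rbox, Fintype.mem_piFinset] at hk
    rw [hT, Fintype.mem_piFinset] at ht
    have hcoord : ∀ i, max |k i - t i| 1 ≤ 3 * 2^(s i) - 2 ∧ (1:ℤ) ≤ max |k i - t i| 1 := by
      intro i
      have h1 := hk i; rw [Finset.mem_Ioo] at h1
      have h2 := ht i; rw [Finset.mem_Icc] at h2
      push_cast at h2
      have hP : (1:ℤ) ≤ 2^(s i) := by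
        have := pow_pos (show (0:ℤ) < 2 by norm_num) (s i); omega
      constructor
      · have habs : |k i - t i| ≤ 3 * 2^(s i) - 2 := abs_le.mpr ⟨by omega, by omega⟩
        exact max_le habs (by omega)
      · exact le_max_right _ _
    have hprodle : (∏ i, max |k i - t i| 1) ≤ (N:ℤ) := by
      calc (∏ i, max |k i - t i| 1) ≤ ∏ i, 3 * 2^(s i) := by
            apply Finset.prod_le_prod
            · intro i _; exact le_trans zero_le_one (hcoord i).2
            · intro i _
              have hP : (1:ℤ) ≤ 2^(s i) := by
                have := pow_pos (show (0:ℤ) < 2 by norm_num) (s i); omega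
              have := (hcoord i).1; omega
        _ = (3:ℤ)^d * 2^(∑ j, s j) := by
            rw [Finset.prod_mul_distrib, Finset.prod_const, Finset.card_univ, Fintype.card_fin,
              Finset.prod_pow_eq_pow_sum]
        _ ≤ (N:ℤ) := hbound
    have hsingle : ∀ i, max |k i - t i| 1 ≤ (N:ℤ) := by
      intro i
      have herase : (1:ℤ) ≤ ∏ j ∈ Finset.univ.erase i, max |k j - t j| 1 := by
        have h := Finset.prod_le_prod (s := Finset.univ.erase i)
          (f := fun _ : Fin d => (1:ℤ)) (g := fun j => max |k j - t j| 1)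
          (fun _ _ => zero_le_one) (fun j _ => (hcoord j).2)
        simpa using h
      have hmul : max |k i - t i| 1 * ∏ j ∈ Finset.univ.erase i, max |k j - t j| 1
          = ∏ j, max |k j - t j| 1 := Finset.mul_prod_erase Finset.univ (fun j => max |k j - t j| 1) (Finset.mem_univ i)
      have : max |k i - t i| 1 ≤ max |k i - t i| 1 * ∏ j ∈ Finset.univ.erase i, max |k j - t j| 1 :=
        le_mul_of_one_le_right (le_trans zero_le_one (hcoord i).2) herase
      omega
    rw [hyperCross, Finset.mem_filter, Fintype.mem_piFinset]
    constructor
    · intro i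
      rw [Finset.mem_Icc]
      have h1 := hsingle i
      have h2 : |k i - t i| ≤ (N:ℤ) := le_trans (le_max_left _ _) h1
      have := abs_le.mp h2
      omega
    · exact hprodle
  -- expansion of the product with the kernel
  have gexp : ∀ k : Fin d → ℤ,
      (fun y : Fin d → ℝ => expFun k y * vpKd (fun i => 2 ^ s i) (x - y))
      = fun y => ∑ t ∈ T, ((∏ i, cJ (2 ^ s i) (t i) * Complex.exp (Complex.I * (t i : ℂ) * (x i : ℂ)))
          * expFun (fun i => k i - t i) y) := by
    intro k
    funext y
    rw [vpKd]
    rw [Finset.prod_congr rfl fun i (_ : i ∈ Finset.univ) => vpK_expand (2 ^ s i) ((x - y) i)]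
    rw [Finset.prod_univ_sum]
    rw [Finset.mul_sum]
    apply Finset.sum_congr rfl
    intro t ht
    have hsplit : ∀ i : Fin d, cJ (2 ^ s i) (t i) * Complex.exp (Complex.I * (t i : ℂ) * (((x - y) i : ℝ):ℂ))
        = (cJ (2 ^ s i) (t i) * Complex.exp (Complex.I * (t i : ℂ) * (x i : ℂ)))
          * Complex.exp (Complex.I * (-(t i) : ℂ) * (y i : ℂ)) := by
      intro i
      have hxy : ((x - y) i : ℝ) = x i - y i := rfl
      have hexp : Complex.I * (t i : ℂ) * (((x i - y i : ℝ)):ℂ)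
          = Complex.I * (t i : ℂ) * (x i : ℂ) + Complex.I * (-(t i) : ℂ) * (y i : ℂ) := by
        push_cast; ring
      rw [hxy, hexp, Complex.exp_add]; ring
    rw [Finset.prod_congr rfl fun i (_ : i ∈ Finset.univ) => hsplit i, Finset.prod_mul_distrib,
      ← Complex.exp_sum]
    rw [expFun, expFun, mul_left_comm, ← Complex.exp_add]
    congr 2
    rw [Finset.mul_sum, Finset.mul_sum, ← Finset.sum_add_distrib]
    apply Finset.sum_congr rfl
    intro i _
    push_cast
    ring
  -- the product with the kernel lies in 𝒯(Γ(N,d))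
  have hmemg : ∀ g ∈ trigSpace (Rbox s),
      (fun y => g y * vpKd (fun i => 2 ^ s i) (x - y)) ∈ trigSpace (hyperCross d N) := by
    intro g hg
    induction hg using Submodule.span_induction with
    | mem g hg =>
      obtain ⟨k, hk, rfl⟩ := hg
      rw [gexp k]
      have hfun : (fun y => ∑ t ∈ T, ((∏ i, cJ (2 ^ s i) (t i) * Complex.exp (Complex.I * (t i : ℂ) * (x i : ℂ)))
            * expFun (fun i => k i - t i) y))
          = ∑ t ∈ T, (∏ i, cJ (2 ^ s i) (t i) * Complex.exp (Complex.I * (t i : ℂ) * (x i : ℂ)))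
            • expFun (fun i => k i - t i) := by
        funext y
        rw [Finset.sum_apply]
        exact Finset.sum_congr rfl fun t _ => rfl
      rw [hfun]
      exact Submodule.sum_mem _ fun t ht => Submodule.smul_mem _ _
        (Submodule.subset_span ⟨_, memHC k hk t ht, rfl⟩)
    | zero =>
      have : (fun y => (0 : (Fin d → ℝ) → ℂ) y * vpKd (fun i => 2 ^ s i) (x - y)) = 0 := by
        funext y; simp
      rw [this]; exact Submodule.zero_mem _
    | add g₁ g₂ hg₁ hg₂ h1 h2 =>
      have : (fun y => (g₁ + g₂) y * vpKd (fun i => 2 ^ s i) (x - y))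
          = (fun y => g₁ y * vpKd (fun i => 2 ^ s i) (x - y))
            + (fun y => g₂ y * vpKd (fun i => 2 ^ s i) (x - y)) := by
        funext y; simp [add_mul]
      rw [this]; exact Submodule.add_mem _ h1 h2
    | smul a g hg h1 =>
      have : (fun y => (a • g) y * vpKd (fun i => 2 ^ s i) (x - y))
          = a • (fun y => g y * vpKd (fun i => 2 ^ s i) (x - y)) := by
        funext y; simp [smul_eq_mul]; ring
      rw [this]; exact Submodule.smul_mem _ _ h1
  refine ⟨heq1 f hf, ?_⟩
  exact (heq1 f hf).trans (hex _ (hmemg f hf)).symm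
end
end

section
/- Let m ∈ ℕ, h = (h_1,…,h_d) ∈ ℤ^d, and suppose the Korobov cubature formula P_m(f,h) := m^{−1} Σ_{ν=1}^m f(w^ν), with nodes w^ν := (2π{νh_1/m}, …, 2π{νh_d/m}), is exact on 𝒯(Γ(N,d)). Let ℓ ∈ ℕ be the largest natural number satisfying 2^ℓ ≤ 3^{−d}·N. Then for any s with ‖s‖₁ ≤ ℓ and any complex numbers a_1,…,a_m: ‖m^{−1} Σ_{ν=1}^m a_ν |𝒱_{2^s}(· − w^ν)|‖_∞ ≤ 3^d·max_{1≤ν≤m} |a_ν|. -/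
noncomputable section
open scoped BigOperators
open MeasureTheory

def eK (k : ℤ) (y : ℝ) : ℂ := Complex.exp (Complex.I * (k : ℂ) * (y : ℂ))

lemma eK_add (k k' : ℤ) (y : ℝ) : eK (k + k') y = eK k y * eK k' y := by
  rw [eK, eK, eK, ← Complex.exp_add]
  push_cast
  ring_nf

lemma eK_zero (y : ℝ) : eK 0 y = 1 := by simp [eK]

lemma conj_eK (k : ℤ) (y : ℝ) : (starRingEnd ℂ) (eK k y) = eK (-k) y := by
  rw [eK, eK, ← Complex.exp_conj]
  push_cast
  simp [map_mul, Complex.conj_I]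

lemma dirichletK_eq (l : ℕ) (x : ℝ) :
    dirichletK l x = ∑ k ∈ Finset.Icc (-(l : ℤ)) (l : ℤ), eK k x := rfl

lemma sum_dirichlet (n : ℕ) (x : ℝ) :
    ∑ l ∈ Finset.range n, dirichletK l x
      = ∑ j ∈ Finset.range n, ∑ j' ∈ Finset.range n, eK ((j : ℤ) - j') x := by
  induction n with
  | zero => simp
  | succ n ih =>
    have expand : ∑ j ∈ Finset.range (n+1), ∑ j' ∈ Finset.range (n+1), eK ((j : ℤ) - j') x
        = (∑ j ∈ Finset.range n, ∑ j' ∈ Finset.range n, eK ((j : ℤ) - j') x)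
          + ((∑ j ∈ Finset.range n, eK ((j:ℤ) - n) x)
          + ((∑ j' ∈ Finset.range n, eK ((n:ℤ) - j') x) + eK 0 x)) := by
      rw [Finset.sum_range_succ]
      simp_rw [Finset.sum_range_succ]
      rw [Finset.sum_add_distrib]
      have h0 : ((n:ℤ) - n) = 0 := by ring
      rw [h0]
      ring
    have h1 : dirichletK n x
        = (∑ j ∈ Finset.range n, eK ((j:ℤ) - n) x)
          + ((∑ j' ∈ Finset.range n, eK ((n:ℤ) - j') x) + eK 0 x) := by
      rw [dirichletK_eq]
      have hsplit : Finset.Icc (-(n:ℤ)) (n:ℤ) = Finset.Icc (-(n:ℤ)) (-1) ∪ Finset.Icc 0 (n:ℤ) := by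
        ext k
        simp only [Finset.mem_union, Finset.mem_Icc]
        omega
      rw [hsplit, Finset.sum_union (by
        rw [Finset.disjoint_left]; intro k hk hk'
        simp only [Finset.mem_Icc] at hk hk'; omega)]
      congr 1
      · apply Finset.sum_nbij' (fun k : ℤ => (k + n).toNat) (fun j : ℕ => (j : ℤ) - n)
        · intro k hk; simp only [Finset.mem_Icc] at hk; simp only [Finset.mem_range]; omega
        · intro j hj; simp only [Finset.mem_range] at hj; simp only [Finset.mem_Icc]; omega
        · intro k hk; simp only [Finset.mem_Icc] at hk; omega
        · intro j hj; simp only [Finset.mem_range] at hj; omega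
        · intro k hk; simp only [Finset.mem_Icc] at hk
          congr 1; omega
      · have : ∑ k ∈ Finset.Icc (0:ℤ) (n:ℤ), eK k x
            = ∑ j' ∈ Finset.range (n+1), eK ((n:ℤ) - j') x := by
          apply Finset.sum_nbij' (fun k : ℤ => (n - k).toNat) (fun j' : ℕ => (n : ℤ) - j')
          · intro k hk; simp only [Finset.mem_Icc] at hk; simp only [Finset.mem_range]; omega
          · intro j hj; simp only [Finset.mem_range] at hj; simp only [Finset.mem_Icc]; omega
          · intro k hk; simp only [Finset.mem_Icc] at hk; omega
          · intro j hj; simp only [Finset.mem_range] at hj; omega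
          · intro k hk; simp only [Finset.mem_Icc] at hk
            congr 1; omega
        rw [this, Finset.sum_range_succ]
        have h0 : ((n:ℤ) - n) = 0 := by ring
        rw [h0]
    rw [Finset.sum_range_succ, ih, expand, h1]

/-- Fejér kernel with `n` terms (classically `K_{n-1}`), as a nonnegative real. -/
def fejK (n : ℕ) (y : ℝ) : ℝ := (n : ℝ)⁻¹ * Complex.normSq (∑ j ∈ Finset.range n, eK j y)

lemma fejK_nonneg (n : ℕ) (y : ℝ) : 0 ≤ fejK n y := by
  apply mul_nonneg (by positivity) (Complex.normSq_nonneg _)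

lemma fejK_eq_double (n : ℕ) (y : ℝ) :
    (fejK n y : ℂ) = (n : ℂ)⁻¹ * ∑ j ∈ Finset.range n, ∑ j' ∈ Finset.range n, eK ((j : ℤ) - j') y := by
  rw [fejK]
  push_cast
  rw [Complex.normSq_eq_conj_mul_self, map_sum]
  rw [Finset.sum_mul_sum]
  congr 1
  conv_rhs => rw [Finset.sum_comm]
  apply Finset.sum_congr rfl
  intro j _
  apply Finset.sum_congr rfl
  intro j' _
  rw [conj_eK, ← eK_add]
  congr 1
  ring

lemma fejK_eq_dirichlet (n : ℕ) (y : ℝ) :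
    ∑ l ∈ Finset.range n, dirichletK l y = (n : ℂ) * (fejK n y : ℂ) := by
  rcases Nat.eq_zero_or_pos n with h | h
  · simp [h]
  · rw [fejK_eq_double, sum_dirichlet]
    have hn : ((n : ℂ)) ≠ 0 := Nat.cast_ne_zero.mpr (by omega)
    field_simp

lemma vpK_eq (j : ℕ) (x : ℝ) :
    vpK j x = ((2 * fejK (2 * j) x - fejK j x : ℝ) : ℂ) := by
  rcases Nat.eq_zero_or_pos j with h | h
  · simp [h, vpK, fejK]
  · have hIco : ∑ l ∈ Finset.Ico j (2 * j), dirichletK l x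
        = (∑ l ∈ Finset.range (2 * j), dirichletK l x) - ∑ l ∈ Finset.range j, dirichletK l x := by
      rw [Finset.range_eq_Ico, Finset.range_eq_Ico]
      rw [← Finset.sum_Ico_consecutive (fun l => dirichletK l x) (by omega : 0 ≤ j) (by omega : j ≤ 2*j)]
      ring
    have hj : ((j : ℂ)) ≠ 0 := Nat.cast_ne_zero.mpr (by omega)
    rw [vpK, hIco, fejK_eq_dirichlet, fejK_eq_dirichlet]
    push_cast
    field_simp

def gK (j : ℕ) (y : ℝ) : ℝ := 2 * fejK (2 * j) y + fejK j y

lemma gK_nonneg (j : ℕ) (y : ℝ) : 0 ≤ gK j y := by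
  have := fejK_nonneg (2 * j) y
  have := fejK_nonneg j y
  unfold gK; linarith

lemma abs_vpK_le (j : ℕ) (x : ℝ) : ‖vpK j x‖ ≤ gK j x := by
  rw [vpK_eq, Complex.norm_real, Real.norm_eq_abs, gK]
  have h1 := fejK_nonneg (2 * j) x
  have h2 := fejK_nonneg j x
  rw [abs_sub_comm]
  calc |fejK j x - 2 * fejK (2*j) x| ≤ |fejK j x| + |2 * fejK (2*j) x| := abs_sub _ _
    _ ≤ 2 * fejK (2 * j) x + fejK j x := by
        rw [abs_of_nonneg h2, abs_of_nonneg (by linarith)]; linarith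

lemma eK_split (k : ℤ) (x t : ℝ) : eK k (x - t) = eK k x * eK (-k) t := by
  rw [eK, eK, eK, ← Complex.exp_add]
  push_cast
  ring_nf

def Aset (j : ℕ) : Finset ((ℕ × ℕ) × Bool) :=
  ((Finset.range (2*j) ×ˢ Finset.range (2*j)) ×ˢ {true})
    ∪ ((Finset.range j ×ˢ Finset.range j) ×ˢ {false})

def coefA (j : ℕ) (x : ℝ) (q : (ℕ × ℕ) × Bool) : ℂ :=
  (if q.2 then 2 * ((2*j : ℕ) : ℂ)⁻¹ else ((j : ℕ) : ℂ)⁻¹) * eK ((q.1.1 : ℤ) - q.1.2) x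

def κA (q : (ℕ × ℕ) × Bool) : ℤ := (q.1.2 : ℤ) - q.1.1

lemma κA_bound {j : ℕ} {q : (ℕ × ℕ) × Bool} (hq : q ∈ Aset j) : |κA q| < 2 * j := by
  rcases Finset.mem_union.mp hq with h | h <;>
  · obtain ⟨⟨p, b⟩, rfl⟩ : ∃ r, r = q := ⟨q, rfl⟩
    simp only [Finset.mem_product, Finset.mem_range] at h
    have := h.1.1
    have := h.1.2
    simp only [κA, abs_lt]
    constructor <;> push_cast <;> omega

lemma sum_disjoint_bool (j : ℕ) :
    Disjoint ((Finset.range (2*j) ×ˢ Finset.range (2*j)) ×ˢ ({true} : Finset Bool))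
      ((Finset.range j ×ˢ Finset.range j) ×ˢ ({false} : Finset Bool)) := by
  rw [Finset.disjoint_left]
  rintro ⟨p, b⟩ hb hb'
  simp only [Finset.mem_product, Finset.mem_singleton] at hb hb'
  rw [hb.2] at hb'
  exact Bool.noConfusion hb'.2

lemma gK_expand (j : ℕ) (x t : ℝ) :
    ((gK j (x - t) : ℝ) : ℂ) = ∑ q ∈ Aset j, coefA j x q * eK (κA q) t := by
  rw [Aset, Finset.sum_union (sum_disjoint_bool j)]
  simp only [Finset.sum_product, Finset.sum_singleton]
  have expand : ∀ n : ℕ, ((fejK n (x - t) : ℝ) : ℂ)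
      = ∑ j1 ∈ Finset.range n, ∑ j2 ∈ Finset.range n,
          (n : ℂ)⁻¹ * (eK ((j1 : ℤ) - j2) x * eK ((j2 : ℤ) - j1) t) := by
    intro n
    rw [fejK_eq_double, Finset.mul_sum]
    apply Finset.sum_congr rfl
    intro j1 _
    rw [Finset.mul_sum]
    apply Finset.sum_congr rfl
    intro j2 _
    rw [eK_split]
    congr 2
    ring
  have : ((gK j (x - t) : ℝ) : ℂ) = 2 * ((fejK (2*j) (x - t) : ℝ) : ℂ) + ((fejK j (x - t) : ℝ) : ℂ) := by
    rw [gK]; push_cast; ring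
  rw [this, expand, expand]
  simp only [coefA, κA, if_true, if_false, Finset.mul_sum]
  congr 1
  · apply Finset.sum_congr rfl; intro j1 _
    apply Finset.sum_congr rfl; intro j2 _
    push_cast
    ring
  · apply Finset.sum_congr rfl; intro j1 _
    apply Finset.sum_congr rfl; intro j2 _
    push_cast
    ring

lemma integral_eK (k : ℤ) :
    ∫ t in Set.Icc (0:ℝ) (2*Real.pi), eK k t
      = if k = 0 then ((2*Real.pi : ℝ) : ℂ) else 0 := by
  rcases eq_or_ne k 0 with rfl | hk
  · simp only [eK_zero, if_true]
    simp [Real.volume_Icc, Real.pi_nonneg]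
  · rw [if_neg hk]
    have hle : (0:ℝ) ≤ 2*Real.pi := by positivity
    rw [MeasureTheory.integral_Icc_eq_integral_Ioc,
      ← intervalIntegral.integral_of_le hle]
    have hc : Complex.I * (k : ℂ) ≠ 0 :=
      mul_ne_zero Complex.I_ne_zero (Int.cast_ne_zero.mpr hk)
    have : ∫ t in (0:ℝ)..(2*Real.pi), eK k t
        = ∫ t in (0:ℝ)..(2*Real.pi), Complex.exp ((Complex.I * (k:ℂ)) * (t:ℂ)) := by
      apply intervalIntegral.integral_congr
      intro t _
      rw [eK]
    rw [this, integral_exp_mul_complex hc]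
    have h1 : Complex.I * (k:ℂ) * ((2*Real.pi : ℝ) : ℂ) = (k : ℂ) * (2 * Real.pi * Complex.I) := by
      push_cast; ring
    rw [h1, Complex.exp_int_mul_two_pi_mul_I]
    simp

lemma integral_gK {j : ℕ} (hj : 0 < j) (x : ℝ) :
    ∫ t in Set.Icc (0:ℝ) (2*Real.pi), ((gK j (x - t) : ℝ) : ℂ) = 3 * ((2*Real.pi : ℝ) : ℂ) := by
  have hint : ∀ q ∈ Aset j, Integrable (fun t => coefA j x q * eK (κA q) t)
      (volume.restrict (Set.Icc (0:ℝ) (2*Real.pi))) := by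
    intro q _
    apply Integrable.const_mul
    apply Continuous.integrableOn_Icc
    exact Complex.continuous_exp.comp (by continuity)
  calc ∫ t in Set.Icc (0:ℝ) (2*Real.pi), ((gK j (x - t) : ℝ) : ℂ)
      = ∫ t in Set.Icc (0:ℝ) (2*Real.pi), ∑ q ∈ Aset j, coefA j x q * eK (κA q) t := by
        apply MeasureTheory.setIntegral_congr_fun (measurableSet_Icc)
        intro t _
        exact gK_expand j x t
    _ = ∑ q ∈ Aset j, ∫ t in Set.Icc (0:ℝ) (2*Real.pi), coefA j x q * eK (κA q) t := by
        exact MeasureTheory.integral_finset_sum _ hint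
    _ = ∑ q ∈ Aset j, coefA j x q * (if κA q = 0 then ((2*Real.pi : ℝ) : ℂ) else 0) := by
        apply Finset.sum_congr rfl
        intro q _
        rw [MeasureTheory.integral_const_mul, integral_eK]
    _ = 3 * ((2*Real.pi : ℝ) : ℂ) := by
        rw [Aset, Finset.sum_union (sum_disjoint_bool j)]
        simp only [Finset.sum_product, Finset.sum_singleton]
        have key : ∀ (n : ℕ), 0 < n → ∀ b : Bool,
            ∑ j1 ∈ Finset.range n, ∑ j2 ∈ Finset.range n,
              coefA j x ((j1, j2), b) * (if κA ((j1, j2), b) = 0 then ((2*Real.pi : ℝ) : ℂ) else 0)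
            = (if b then 2 * ((2*j : ℕ) : ℂ)⁻¹ else ((j : ℕ) : ℂ)⁻¹) * n * ((2*Real.pi : ℝ) : ℂ) := by
          intro n hn b
          have : ∀ j1 ∈ Finset.range n,
              ∑ j2 ∈ Finset.range n,
                coefA j x ((j1, j2), b) * (if κA ((j1, j2), b) = 0 then ((2*Real.pi : ℝ) : ℂ) else 0)
              = (if b then 2 * ((2*j : ℕ) : ℂ)⁻¹ else ((j : ℕ) : ℂ)⁻¹) * ((2*Real.pi : ℝ) : ℂ) := by
            intro j1 hj1
            rw [Finset.sum_eq_single j1]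
            · simp only [coefA, κA, sub_self, eK_zero, mul_one]
              norm_num
            · intro j2 _ hne
              rw [if_neg, mul_zero]
              simp only [κA]
              intro hzero
              apply hne
              have : (j2 : ℤ) = j1 := by omega
              exact_mod_cast this
            · intro hj1'
              exact absurd hj1 hj1'
          rw [Finset.sum_congr rfl this, Finset.sum_const, Finset.card_range]
          simp [mul_comm, mul_assoc, mul_left_comm]
        rw [key (2*j) (by omega) true, key j hj false]
        have h2j : ((2*j : ℕ) : ℂ) ≠ 0 := Nat.cast_ne_zero.mpr (by omega)
        have hjc : ((j : ℕ) : ℂ) ≠ 0 := Nat.cast_ne_zero.mpr (by omega)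
        simp only [if_true, if_false, Bool.false_eq_true, ite_false]
        field_simp
        ring

def gKd {d : ℕ} (j : Fin d → ℕ) (x w : Fin d → ℝ) : ℝ := ∏ i, gK (j i) (x i - w i)

lemma gKd_nonneg {d : ℕ} (j : Fin d → ℕ) (x w : Fin d → ℝ) : 0 ≤ gKd j x w :=
  Finset.prod_nonneg fun i _ => gK_nonneg _ _

lemma abs_vpKd_le {d : ℕ} (j : Fin d → ℕ) (x w : Fin d → ℝ) :
    ‖vpKd j (x - w)‖ ≤ gKd j x w := by
  rw [vpKd, norm_prod]
  apply Finset.prod_le_prod (fun i _ => norm_nonneg _)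
  intro i _
  have : (x - w) i = x i - w i := rfl
  rw [this]
  exact abs_vpK_le _ _

lemma prod_eK_eq_expFun {d : ℕ} (k : Fin d → ℤ) (w : Fin d → ℝ) :
    ∏ i, eK (k i) (w i) = expFun k w := by
  rw [expFun]
  simp only [eK]
  rw [← Complex.exp_sum]
  congr 1
  rw [Finset.mul_sum]
  apply Finset.sum_congr rfl
  intro i _
  ring

lemma gKd_expand {d : ℕ} (j : Fin d → ℕ) (x : Fin d → ℝ) :
    (fun w : Fin d → ℝ => ((gKd j x w : ℝ) : ℂ))
      = fun w => ∑ t ∈ Fintype.piFinset (fun i => Aset (j i)),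
          (∏ i, coefA (j i) (x i) (t i)) * expFun (fun i => κA (t i)) w := by
  funext w
  have h1 : ((gKd j x w : ℝ) : ℂ) = ∏ i, ((gK (j i) (x i - w i) : ℝ) : ℂ) := by
    rw [gKd]; push_cast; rfl
  rw [h1]
  have h2 : ∀ i : Fin d, ((gK (j i) (x i - w i) : ℝ) : ℂ)
      = ∑ q ∈ Aset (j i), coefA (j i) (x i) q * eK (κA q) (w i) := fun i => gK_expand _ _ _
  rw [Finset.prod_congr rfl (fun i _ => h2 i), Finset.prod_univ_sum]
  apply Finset.sum_congr rfl
  intro t _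
  rw [Finset.prod_mul_distrib, prod_eK_eq_expFun]

lemma gKd_mem {d N : ℕ} (j : Fin d → ℕ) (x : Fin d → ℝ)
    (hbig : ∀ k : Fin d → ℤ, (∀ i, |k i| < 2 * (j i : ℤ)) → k ∈ hyperCross d N) :
    (fun w : Fin d → ℝ => ((gKd j x w : ℝ) : ℂ)) ∈ trigSpace (hyperCross d N) := by
  rw [gKd_expand]
  have : (fun w : Fin d → ℝ => ∑ t ∈ Fintype.piFinset (fun i => Aset (j i)),
        (∏ i, coefA (j i) (x i) (t i)) * expFun (fun i => κA (t i)) w)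
      = ∑ t ∈ Fintype.piFinset (fun i => Aset (j i)),
        (∏ i, coefA (j i) (x i) (t i)) • expFun (fun i => κA (t i)) := by
    funext w
    rw [Finset.sum_apply]
    rfl
  rw [this]
  apply Submodule.sum_mem
  intro t ht
  apply Submodule.smul_mem
  apply Submodule.subset_span
  refine ⟨fun i => κA (t i), ?_, rfl⟩
  rw [Finset.mem_coe]
  apply hbig
  intro i
  have hti : t i ∈ Aset (j i) := by
    rw [Fintype.mem_piFinset] at ht
    exact ht i
  exact_mod_cast κA_bound hti

lemma integral_gKd {d : ℕ} {j : Fin d → ℕ} (hj : ∀ i, 0 < j i) (x : Fin d → ℝ) :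
    ∫ w in cube d, ((gKd j x w : ℝ) : ℂ) = (3 * ((2 * Real.pi : ℝ) : ℂ)) ^ d := by
  have hcube : MeasurableSet (cube d) := measurableSet_Icc
  rw [← MeasureTheory.integral_indicator hcube]
  have hind : (Set.indicator (cube d) fun w => ((gKd j x w : ℝ) : ℂ))
      = fun w => ∏ i, Set.indicator (Set.Icc (0:ℝ) (2 * Real.pi))
          (fun t => ((gK (j i) (x i - t) : ℝ) : ℂ)) (w i) := by
    funext w
    by_cases hw : w ∈ cube d
    · rw [Set.indicator_of_mem hw]
      have hwi : ∀ i, w i ∈ Set.Icc (0:ℝ) (2 * Real.pi) := by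
        intro i
        obtain ⟨h1, h2⟩ := hw
        exact ⟨h1 i, h2 i⟩
      rw [Finset.prod_congr rfl (fun i _ => Set.indicator_of_mem (hwi i) _)]
      rw [gKd]
      push_cast
      rfl
    · rw [Set.indicator_of_notMem hw]
      have : ∃ i, w i ∉ Set.Icc (0:ℝ) (2 * Real.pi) := by
        by_contra hc
        push_neg at hc
        exact hw ⟨fun i => (hc i).1, fun i => (hc i).2⟩
      obtain ⟨i, hi⟩ := this
      symm
      apply Finset.prod_eq_zero (Finset.mem_univ i)
      rw [Set.indicator_of_notMem hi]
  rw [hind]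
  rw [MeasureTheory.integral_fintype_prod_volume_eq_prod
    (f := fun i t => Set.indicator (Set.Icc (0:ℝ) (2 * Real.pi))
      (fun t => ((gK (j i) (x i - t) : ℝ) : ℂ)) t)]
  have : ∀ i : Fin d, ∫ t : ℝ, Set.indicator (Set.Icc (0:ℝ) (2 * Real.pi))
      (fun t => ((gK (j i) (x i - t) : ℝ) : ℂ)) t = 3 * ((2 * Real.pi : ℝ) : ℂ) := by
    intro i
    rw [MeasureTheory.integral_indicator measurableSet_Icc]
    exact integral_gK (hj i) (x i)
  rw [Finset.prod_congr rfl (fun i _ => this i), Finset.prod_const, Finset.card_univ,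
    Fintype.card_fin]

/-- property (II) of the Korobov point set, a uniform bound for sums of
absolute values of shifted de la Vallée Poussin kernels (Theorem CT1 (II)). -/
theorem stmt15 (d m N : ℕ) (hd : 0 < d) (hm : 0 < m) (h : Fin d → ℤ)
    (hex : ∀ f ∈ trigSpace (hyperCross d N),
      (m : ℂ)⁻¹ * ∑ ν ∈ Finset.Icc 1 m, f (korNode m h ν) =
        (((2 * Real.pi) ^ d : ℝ) : ℂ)⁻¹ * ∫ x in cube d, f x)
    (ℓ : ℕ) (hℓ : IsGreatest {k : ℕ | (2 : ℝ) ^ k ≤ ((3 : ℝ) ^ d)⁻¹ * N} ℓ)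
    (s : Fin d → ℕ) (hs : (∑ j, s j) ≤ ℓ)
    (a : Fin m → ℂ) :
    unifNorm (fun x => (m : ℂ)⁻¹ * ∑ ν : Fin m,
        a ν * (‖vpKd (fun i => 2 ^ s i) (x - korNode m h ((ν : ℕ) + 1))‖ : ℂ)) ≤
      3 ^ d * ⨆ ν : Fin m, ‖a ν‖ := by
  set jf : Fin d → ℕ := fun i => 2 ^ s i with hjf
  -- N is large
  have hNR : (2 : ℝ) ^ (ℓ + d) ≤ (N : ℝ) := by
    have h1 := hℓ.1
    have h2d3d : (2 : ℝ) ^ d ≤ 3 ^ d := pow_le_pow_left₀ (by norm_num) (by norm_num) d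
    have h3d : (0:ℝ) < 3 ^ d := by positivity
    have hN0 : (0:ℝ) ≤ N := Nat.cast_nonneg N
    rw [pow_add]
    calc (2:ℝ)^ℓ * 2^d ≤ ((3:ℝ)^d)⁻¹ * N * 2^d := by
          apply mul_le_mul_of_nonneg_right h1 (by positivity)
      _ = (N:ℝ) * (2^d / 3^d) := by field_simp
      _ ≤ (N:ℝ) * 1 := by
          apply mul_le_mul_of_nonneg_left _ hN0
          rw [div_le_one h3d]; exact h2d3d
      _ = N := mul_one _
  have hNZ : (2 : ℤ) ^ (ℓ + d) ≤ (N : ℤ) := by exact_mod_cast hNR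
  -- frequency membership
  have hbig : ∀ k : Fin d → ℤ, (∀ i, |k i| < 2 * ((jf i : ℕ) : ℤ)) → k ∈ hyperCross d N := by
    intro k hk
    have hsle : ∀ i, s i ≤ ℓ := by
      intro i
      exact le_trans (Finset.single_le_sum (f := fun i => s i) (fun _ _ => Nat.zero_le _)
        (Finset.mem_univ i)) hs
    have hki : ∀ i, |k i| < 2 ^ (s i + 1) := by
      intro i
      have := hk i
      rw [hjf] at this
      calc |k i| < 2 * ((2 ^ s i : ℕ) : ℤ) := this
        _ = 2 ^ (s i + 1) := by push_cast; ring
    have hpowle : ∀ i, (2:ℤ) ^ (s i + 1) ≤ 2 ^ (ℓ + d) := by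
      intro i
      apply pow_le_pow_right₀ (by norm_num)
      have := hsle i
      omega
    have hkiN : ∀ i, |k i| ≤ (N : ℤ) := fun i =>
      le_trans (le_of_lt (hki i)) (le_trans (hpowle i) hNZ)
    rw [hyperCross, Finset.mem_filter]
    constructor
    · rw [Fintype.mem_piFinset]
      intro i
      rw [Finset.mem_Icc]
      have := hkiN i
      rw [abs_le] at this
      exact this
    · calc ∏ i, max |k i| 1 ≤ ∏ i, (2:ℤ) ^ (s i + 1) := by
            apply Finset.prod_le_prod
            · intro i _; positivity
            · intro i _
              apply max_le (le_of_lt (hki i))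
              exact one_le_pow_iff_of_nonneg (by norm_num) (by omega) |>.mpr (by norm_num)
        _ = 2 ^ (∑ i, (s i + 1)) := Finset.prod_pow_eq_pow_sum _ _ _
        _ ≤ 2 ^ (ℓ + d) := by
            apply pow_le_pow_right₀ (by norm_num)
            rw [Finset.sum_add_distrib, Finset.sum_const, Finset.card_univ, Fintype.card_fin,
              smul_eq_mul, mul_one]
            omega
        _ ≤ (N : ℤ) := hNZ
  -- cubature value
  have hjpos : ∀ i, 0 < jf i := fun i => pow_pos (by norm_num) _
  have hπ : (0:ℝ) < 2 * Real.pi := by positivity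
  rw [unifNorm]
  set M := ⨆ ν : Fin m, ‖a ν‖ with hM
  have hM0 : 0 ≤ M := Real.iSup_nonneg fun ν => norm_nonneg _
  have hMle : ∀ ν : Fin m, ‖a ν‖ ≤ M := by
    intro ν
    rw [hM]
    exact le_ciSup (f := fun ν => ‖a ν‖) (Set.Finite.bddAbove (Set.finite_range _)) ν
  apply Real.iSup_le _ (by positivity)
  rintro ⟨x, hx⟩
  simp only
  -- the cubature identity for gKd at this x
  have hcubC := hex _ (gKd_mem jf x hbig)
  rw [integral_gKd hjpos x] at hcubC
  have hrhs : (((2 * Real.pi) ^ d : ℝ) : ℂ)⁻¹ * (3 * ((2 * Real.pi : ℝ) : ℂ)) ^ d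
      = ((3:ℝ)^d : ℝ) := by
    have hne : ((2 * Real.pi : ℝ) : ℂ) ≠ 0 := by
      simp only [ne_eq, Complex.ofReal_eq_zero]
      positivity
    have hcast : (((2 * Real.pi) ^ d : ℝ) : ℂ) = ((2 * Real.pi : ℝ) : ℂ) ^ d := by push_cast; ring
    rw [hcast, mul_pow]
    rw [mul_comm ((3:ℂ)^d), ← mul_assoc, inv_mul_cancel₀ (pow_ne_zero d hne), one_mul]
    push_cast
    ring
  rw [hrhs] at hcubC
  have hcubR : (m:ℝ)⁻¹ * ∑ ν ∈ Finset.Icc 1 m, gKd jf x (korNode m h ν) = (3:ℝ)^d := by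
    apply Complex.ofReal_injective
    push_cast
    push_cast at hcubC
    convert hcubC using 2
  have hfin : ∑ ν ∈ Finset.Icc 1 m, gKd jf x (korNode m h ν)
      = ∑ ν : Fin m, gKd jf x (korNode m h ((ν : ℕ) + 1)) := by
    have hIcc : Finset.Icc 1 m = Finset.Ico 1 (m + 1) := by
      ext k; simp only [Finset.mem_Icc, Finset.mem_Ico]; omega
    rw [hIcc, Finset.sum_Ico_eq_sum_range]
    simp only [Nat.add_sub_cancel]
    rw [Fin.sum_univ_eq_sum_range (fun i => gKd jf x (korNode m h (i + 1)))]
    apply Finset.sum_congr rfl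
    intro i _
    rw [add_comm]
  have hcubR' : (m:ℝ)⁻¹ * ∑ ν : Fin m, gKd jf x (korNode m h ((ν : ℕ) + 1)) = (3:ℝ)^d := by
    rw [← hfin]; exact hcubR
  -- main estimate
  have hterm : ∀ ν : Fin m,
      ‖a ν * (‖vpKd jf (x - korNode m h ((ν : ℕ) + 1))‖ : ℂ)‖
        ≤ M * gKd jf x (korNode m h ((ν : ℕ) + 1)) := by
    intro ν
    rw [norm_mul, Complex.norm_real, Real.norm_of_nonneg (norm_nonneg _)]
    exact mul_le_mul (hMle ν) (abs_vpKd_le jf x _) (norm_nonneg _) hM0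
  calc ‖(m : ℂ)⁻¹ * ∑ ν : Fin m,
        a ν * (‖vpKd jf (x - korNode m h ((ν : ℕ) + 1))‖ : ℂ)‖
      = (m:ℝ)⁻¹ * ‖∑ ν : Fin m,
          a ν * (‖vpKd jf (x - korNode m h ((ν : ℕ) + 1))‖ : ℂ)‖ := by
        rw [norm_mul, norm_inv, Complex.norm_natCast]
    _ ≤ (m:ℝ)⁻¹ * ∑ ν : Fin m, M * gKd jf x (korNode m h ((ν : ℕ) + 1)) := by
        apply mul_le_mul_of_nonneg_left _ (by positivity)
        calc ‖∑ ν : Fin m,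
              a ν * (‖vpKd jf (x - korNode m h ((ν : ℕ) + 1))‖ : ℂ)‖
            ≤ ∑ ν : Fin m, ‖
                (a ν * (‖vpKd jf (x - korNode m h ((ν : ℕ) + 1))‖ : ℂ))‖ :=
              norm_sum_le _ _
          _ ≤ ∑ ν : Fin m, M * gKd jf x (korNode m h ((ν : ℕ) + 1)) :=
              Finset.sum_le_sum fun ν _ => hterm ν
    _ = M * ((m:ℝ)⁻¹ * ∑ ν : Fin m, gKd jf x (korNode m h ((ν : ℕ) + 1))) := by
        rw [← Finset.mul_sum]; ring
    _ = M * (3:ℝ)^d := by rw [hcubR']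
    _ = 3 ^ d * M := by ring
end
end

section
/- Let m ∈ ℕ, h = (h_1,…,h_d) ∈ ℤ^d, and suppose the Korobov cubature formula P_m(f,h) := m^{−1} Σ_{ν=1}^m f(w^ν), with nodes w^ν := (2π{νh_1/m}, …, 2π{νh_d/m}), is exact on 𝒯(Γ(N,d)). Let ℓ be the largest natural number with 2^ℓ ≤ 3^{−d}·N, and for s ∈ ℤ_+^d define V_s(f) := m^{−1} Σ_{ν=1}^m f(w^ν) 𝒱_{2^s}(· − w^ν). Then for any continuous function f on 𝕋^d: min_{s: ‖s‖₁ = ℓ} ‖f − V_s(f)‖_∞ ≤ (3^d + 1)·min_{s: ‖s‖₁ = ℓ} d(f, 𝒯(R(s)))_∞. -/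
noncomputable section
open scoped BigOperators
open MeasureTheory

/-- The sampling operator `V_s` associated with the Korobov points:
`V_s(f)(x) = m⁻¹ ∑_ν f(w^ν) 𝒱_{2^s}(x − w^ν)`. -/
def korV (m : ℕ) {d : ℕ} (h : Fin d → ℤ) (s : Fin d → ℕ) (f : (Fin d → ℝ) → ℂ) :
    (Fin d → ℝ) → ℂ :=
  fun x => (m : ℂ)⁻¹ * ∑ ν ∈ Finset.Icc 1 m,
    f (korNode m h ν) * vpKd (fun i => 2 ^ s i) (x - korNode m h ν)
namespace Stmt16Aux
open Finset Complex

/-- partial sums of exponentials -/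
def Gker (n : ℕ) (t : ℝ) : ℂ := ∑ k ∈ Finset.range n, Complex.exp (Complex.I * (k : ℂ) * (t : ℂ))

/-- sums of Dirichlet kernels (unnormalized Fejér) -/
def Fker (n : ℕ) (t : ℝ) : ℂ := ∑ l ∈ Finset.range n, dirichletK l t

lemma conj_exp_self (c : ℂ) (hc : (starRingEnd ℂ) c = c) (t : ℝ) :
    (starRingEnd ℂ) (Complex.exp (Complex.I * c * (t : ℂ))) =
      Complex.exp (-(Complex.I * c * (t : ℂ))) := by
  rw [← Complex.exp_conj]
  congr 1
  rw [map_mul, map_mul, Complex.conj_I, Complex.conj_ofReal, hc]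
  ring

lemma Fker_mul_conj (n : ℕ) (t : ℝ) :
    Fker n t = Gker n t * (starRingEnd ℂ) (Gker n t) := by
  induction n with
  | zero => simp [Fker, Gker]
  | succ n ih =>
    have hG : Gker (n+1) t = Gker n t + Complex.exp (Complex.I * (n : ℂ) * (t : ℂ)) := by
      rw [Gker, Finset.sum_range_succ]; rfl
    have hF : Fker (n+1) t = Fker n t + dirichletK n t := by
      rw [Fker, Finset.sum_range_succ]; rfl
    set E := Complex.exp (Complex.I * (n : ℂ) * (t : ℂ)) with hE
    have hcn : (starRingEnd ℂ) ((n : ℕ) : ℂ) = ((n : ℕ) : ℂ) := Complex.conj_natCast n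
    have hEE : E * (starRingEnd ℂ) E = 1 := by
      rw [hE, conj_exp_self _ hcn, ← Complex.exp_add, add_neg_cancel, Complex.exp_zero]
    have C1 : Gker n t * (starRingEnd ℂ) E =
        ∑ c ∈ Finset.Icc (-(n:ℤ)) (-1), Complex.exp (Complex.I * (c:ℂ) * (t:ℂ)) := by
      rw [hE, conj_exp_self _ hcn, Gker, Finset.sum_mul]
      refine Finset.sum_nbij' (fun p => (p : ℤ) - n) (fun c => (c + n).toNat) ?_ ?_ ?_ ?_ ?_
      · intro a ha; simp only [Finset.mem_range] at ha; simp only [Finset.mem_Icc]; omega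
      · intro a ha; simp only [Finset.mem_Icc] at ha; simp only [Finset.mem_range]; omega
      · intro a ha; simp only [Finset.mem_range] at ha; omega
      · intro a ha; simp only [Finset.mem_Icc] at ha; omega
      · intro a ha
        rw [← Complex.exp_add]
        congr 1
        push_cast
        ring
    have C2 : E * (starRingEnd ℂ) (Gker n t) =
        ∑ c ∈ Finset.Icc (1:ℤ) (n:ℤ), Complex.exp (Complex.I * (c:ℂ) * (t:ℂ)) := by
      rw [Gker, map_sum, Finset.mul_sum]
      have hcong : ∀ q ∈ Finset.range n,
          E * (starRingEnd ℂ) (Complex.exp (Complex.I * (q:ℂ) * (t:ℂ)))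
          = E * Complex.exp (-(Complex.I * (q:ℂ) * (t:ℂ))) := by
        intro q hq; rw [conj_exp_self _ (Complex.conj_natCast q)]
      rw [Finset.sum_congr rfl hcong]
      refine Finset.sum_nbij' (fun q => (n : ℤ) - q) (fun c => ((n:ℤ) - c).toNat) ?_ ?_ ?_ ?_ ?_
      · intro a ha; simp only [Finset.mem_range] at ha; simp only [Finset.mem_Icc]; omega
      · intro a ha; simp only [Finset.mem_Icc] at ha; simp only [Finset.mem_range]; omega
      · intro a ha; simp only [Finset.mem_range] at ha; omega
      · intro a ha; simp only [Finset.mem_Icc] at ha; omega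
      · intro a ha
        rw [hE, ← Complex.exp_add]
        congr 1
        push_cast
        ring
    have hsplit : Finset.Icc (-(n:ℤ)) (n:ℤ) =
        (Finset.Icc (-(n:ℤ)) (-1)) ∪ (Finset.Icc 0 (n:ℤ)) := by
      ext c; simp only [Finset.mem_Icc, Finset.mem_union]; omega
    have hdisj : Disjoint (Finset.Icc (-(n:ℤ)) (-1)) (Finset.Icc 0 (n:ℤ)) := by
      rw [Finset.disjoint_left]
      intro c hc hc'
      simp only [Finset.mem_Icc] at hc hc'
      omega
    have hins : Finset.Icc (0:ℤ) (n:ℤ) = insert 0 (Finset.Icc 1 (n:ℤ)) := by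
      ext c; simp only [Finset.mem_Icc, Finset.mem_insert]; omega
    have hD : dirichletK n t =
        Gker n t * (starRingEnd ℂ) E + E * (starRingEnd ℂ) (Gker n t) + 1 := by
      rw [C1, C2, dirichletK, hsplit, Finset.sum_union hdisj, hins,
        Finset.sum_insert (by simp)]
      norm_num
      ring
    calc Fker (n+1) t
        = Gker n t * (starRingEnd ℂ) (Gker n t) +
          (Gker n t * (starRingEnd ℂ) E + E * (starRingEnd ℂ) (Gker n t) + 1) := by
          rw [hF, ih, hD]
      _ = (Gker n t + E) * ((starRingEnd ℂ) (Gker n t) + (starRingEnd ℂ) E) := by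
          rw [← hEE]; ring
      _ = Gker (n+1) t * (starRingEnd ℂ) (Gker (n+1) t) := by rw [hG, map_add]

lemma Fker_eq_normSq (n : ℕ) (t : ℝ) :
    Fker n t = ((Complex.normSq (Gker n t) : ℝ) : ℂ) := by
  rw [Fker_mul_conj, Complex.mul_conj]

end Stmt16Aux
namespace Stmt16Aux
open Finset Complex

/-- coefficient of the de la Vallée Poussin kernel -/
def bcoef (j : ℕ) (c : ℤ) : ℂ :=
  (j:ℂ)⁻¹ * (((2*j - c.natAbs : ℕ) : ℂ) - ((j - c.natAbs : ℕ) : ℂ))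

/-- coefficient of the majorant kernel -/
def mcoef (j : ℕ) (c : ℤ) : ℂ :=
  (j:ℂ)⁻¹ * (((2*j - c.natAbs : ℕ) : ℂ) + ((j - c.natAbs : ℕ) : ℂ))

/-- the real majorant -/
def Mre (j : ℕ) (t : ℝ) : ℝ :=
  (j:ℝ)⁻¹ * (Complex.normSq (Gker (2*j) t) + Complex.normSq (Gker j t))

/-- the complex majorant -/
def Mc (j : ℕ) (t : ℝ) : ℂ := (j:ℂ)⁻¹ * (Fker (2*j) t + Fker j t)

lemma Mc_eq_Mre (j : ℕ) (t : ℝ) : Mc j t = ((Mre j t : ℝ) : ℂ) := by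
  rw [Mc, Mre, Fker_eq_normSq, Fker_eq_normSq]
  push_cast
  ring

lemma Fker_coef (n B : ℕ) (hnB : n ≤ B) (t : ℝ) :
    Fker n t = ∑ c ∈ Finset.Icc (-(B:ℤ)+1) ((B:ℤ)-1),
      ((n - c.natAbs : ℕ) : ℂ) * Complex.exp (Complex.I * (c:ℂ) * (t:ℂ)) := by
  have inner : ∀ l ∈ Finset.range n, dirichletK l t =
      ∑ c ∈ Finset.Icc (-(B:ℤ)+1) ((B:ℤ)-1),
        (if c.natAbs ≤ l then Complex.exp (Complex.I * (c:ℂ) * (t:ℂ)) else 0) := by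
    intro l hl
    simp only [Finset.mem_range] at hl
    rw [← Finset.sum_filter, dirichletK]
    congr 1
    ext c
    simp only [Finset.mem_filter, Finset.mem_Icc]
    omega
  rw [Fker, Finset.sum_congr rfl inner, Finset.sum_comm]
  refine Finset.sum_congr rfl fun c hc => ?_
  rw [← Finset.sum_filter]
  have : (Finset.range n).filter (fun l => c.natAbs ≤ l) = Finset.Ico c.natAbs n := by
    ext l; simp only [Finset.mem_filter, Finset.mem_range, Finset.mem_Ico]; omega
  rw [this, Finset.sum_const, Nat.card_Ico, nsmul_eq_mul]

lemma vpK_coef (j : ℕ) (t : ℝ) :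
    vpK j t = ∑ c ∈ Finset.Icc (-(2*j:ℤ)+1) ((2*j:ℤ)-1),
      bcoef j c * Complex.exp (Complex.I * (c:ℂ) * (t:ℂ)) := by
  rw [vpK, Finset.sum_Ico_eq_sub _ (by omega : j ≤ 2*j)]
  rw [show (∑ l ∈ Finset.range (2*j), dirichletK l t) = Fker (2*j) t from rfl,
    show (∑ l ∈ Finset.range j, dirichletK l t) = Fker j t from rfl]
  rw [Fker_coef (2*j) (2*j) le_rfl t, Fker_coef j (2*j) (by omega) t]
  push_cast [← Finset.sum_sub_distrib]
  rw [Finset.mul_sum]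
  refine Finset.sum_congr rfl fun c hc => ?_
  rw [bcoef]
  ring

lemma Mc_coef (j : ℕ) (t : ℝ) :
    Mc j t = ∑ c ∈ Finset.Icc (-(2*j:ℤ)+1) ((2*j:ℤ)-1),
      mcoef j c * Complex.exp (Complex.I * (c:ℂ) * (t:ℂ)) := by
  rw [Mc, Fker_coef (2*j) (2*j) le_rfl t, Fker_coef j (2*j) (by omega) t]
  rw [← Finset.sum_add_distrib, Finset.mul_sum]
  refine Finset.sum_congr rfl fun c hc => ?_
  rw [mcoef]
  ring

lemma bcoef_one {j : ℕ} (hj : 0 < j) {c : ℤ} (hc : c.natAbs ≤ j) : bcoef j c = 1 := by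
  rw [bcoef]
  have h1 : ((2*j - c.natAbs : ℕ) : ℂ) = 2*(j:ℂ) - (c.natAbs : ℂ) := by
    push_cast [Nat.cast_sub (by omega : c.natAbs ≤ 2*j)]; ring
  have h2 : ((j - c.natAbs : ℕ) : ℂ) = (j:ℂ) - (c.natAbs : ℂ) := by
    push_cast [Nat.cast_sub hc]; ring
  rw [h1, h2]
  have : (j:ℂ) ≠ 0 := by exact_mod_cast hj.ne'
  field_simp
  ring

lemma mcoef_zero {j : ℕ} (hj : 0 < j) : mcoef j 0 = 3 := by
  rw [mcoef]
  simp only [Int.natAbs_zero, Nat.sub_zero]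
  have : (j:ℂ) ≠ 0 := by exact_mod_cast hj.ne'
  push_cast
  field_simp
  ring

lemma norm_vpK_le (j : ℕ) (t : ℝ) : ‖vpK j t‖ ≤ Mre j t := by
  rw [vpK, Finset.sum_Ico_eq_sub _ (by omega : j ≤ 2*j)]
  rw [show (∑ l ∈ Finset.range (2*j), dirichletK l t) = Fker (2*j) t from rfl,
    show (∑ l ∈ Finset.range j, dirichletK l t) = Fker j t from rfl]
  rw [norm_mul, Mre]
  have h1 : ‖((j:ℂ)⁻¹)‖ = (j:ℝ)⁻¹ := by
    rw [norm_inv, Complex.norm_natCast]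
  rw [h1]
  refine mul_le_mul_of_nonneg_left ?_ (by positivity)
  calc ‖Fker (2*j) t - Fker j t‖
      ≤ ‖Fker (2*j) t‖ + ‖Fker j t‖ := by
        exact (norm_sub_le _ _)
    _ = Complex.normSq (Gker (2*j) t) + Complex.normSq (Gker j t) := by
        rw [Fker_eq_normSq, Fker_eq_normSq, Complex.norm_real, Complex.norm_real, Real.norm_eq_abs, Real.norm_eq_abs,
          _root_.abs_of_nonneg (Complex.normSq_nonneg _), _root_.abs_of_nonneg (Complex.normSq_nonneg _)]

end Stmt16Aux
namespace Stmt16Aux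
open Finset Complex MeasureTheory

/-- the cubature functional -/
def Qc (m : ℕ) {d : ℕ} (h : Fin d → ℤ) (g : (Fin d → ℝ) → ℂ) : ℂ :=
  (m:ℂ)⁻¹ * ∑ ν ∈ Finset.Icc 1 m, g (korNode m h ν)

lemma integral_exp_Icc (c : ℤ) :
    (∫ t in Set.Icc (0:ℝ) (2*Real.pi), Complex.exp (Complex.I * (c:ℂ) * (t:ℂ)))
      = if c = 0 then ((2*Real.pi : ℝ):ℂ) else 0 := by
  by_cases hc : c = 0
  · simp only [hc, Int.cast_zero, mul_zero, zero_mul, Complex.exp_zero, if_true]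
    rw [MeasureTheory.setIntegral_const]
    rw [Real.volume_real_Icc_of_le (by linarith [Real.pi_pos])]
    simp [Complex.real_smul]
  · rw [if_neg hc]
    rw [MeasureTheory.integral_Icc_eq_integral_Ioc,
      ← intervalIntegral.integral_of_le (by linarith [Real.pi_pos] : (0:ℝ) ≤ 2*Real.pi)]
    have hne : Complex.I * (c:ℂ) ≠ 0 := by
      simp [Complex.I_ne_zero, Int.cast_ne_zero, hc]
    rw [show (fun t : ℝ => Complex.exp (Complex.I * (c:ℂ) * (t:ℂ)))
        = (fun t : ℝ => Complex.exp ((Complex.I * (c:ℂ)) * (t:ℂ))) from rfl]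
    rw [integral_exp_mul_complex hne]
    have h2 : Complex.I * (c:ℂ) * ((2*Real.pi : ℝ):ℂ) = (c:ℂ) * (2*(Real.pi:ℂ)*Complex.I) := by
      push_cast; ring
    have h0 : Complex.I * (c:ℂ) * ((0:ℝ):ℂ) = 0 := by push_cast; ring
    rw [h2, h0, Complex.exp_int_mul_two_pi_mul_I, Complex.exp_zero, sub_self, zero_div]

lemma cube_eq_pi (d : ℕ) :
    cube d = Set.pi Set.univ (fun _ : Fin d => Set.Icc (0:ℝ) (2*Real.pi)) := by
  rw [cube, Set.pi_univ_Icc]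
  rfl

lemma integral_expFun {d : ℕ} (k : Fin d → ℤ) :
    (∫ x in cube d, expFun k x) = if k = 0 then (((2*Real.pi)^d : ℝ) : ℂ) else 0 := by
  have hmeas : MeasurableSet (cube d) := measurableSet_Icc
  have hind : (cube d).indicator (expFun k)
      = fun x => ∏ i, (Set.Icc (0:ℝ) (2*Real.pi)).indicator
          (fun t => Complex.exp (Complex.I * (k i : ℂ) * (t:ℂ))) (x i) := by
    funext x
    by_cases hx : x ∈ cube d
    · rw [Set.indicator_of_mem hx]
      have hx' : ∀ i, x i ∈ Set.Icc (0:ℝ) (2*Real.pi) := by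
        rw [cube_eq_pi] at hx
        exact fun i => hx i (Set.mem_univ i)
      rw [expFun]
      rw [Finset.mul_sum, Complex.exp_sum]
      refine Finset.prod_congr rfl fun i _ => ?_
      rw [Set.indicator_of_mem (hx' i), mul_assoc]
    · rw [Set.indicator_of_notMem hx]
      have : ∃ i, x i ∉ Set.Icc (0:ℝ) (2*Real.pi) := by
        by_contra hcon
        push_neg at hcon
        apply hx
        rw [cube_eq_pi]
        exact fun i _ => hcon i
      obtain ⟨i, hi⟩ := this
      symm
      apply Finset.prod_eq_zero (Finset.mem_univ i)
      rw [Set.indicator_of_notMem hi]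
  rw [← MeasureTheory.integral_indicator hmeas, hind,
    MeasureTheory.integral_fintype_prod_volume_eq_prod (ι := Fin d)
      (f := fun i => (Set.Icc (0:ℝ) (2*Real.pi)).indicator
        (fun t => Complex.exp (Complex.I * (k i : ℂ) * (t:ℂ))))]
  have : ∀ i, (∫ t, (Set.Icc (0:ℝ) (2*Real.pi)).indicator
      (fun t => Complex.exp (Complex.I * (k i : ℂ) * (t:ℂ))) t)
      = if k i = 0 then ((2*Real.pi : ℝ):ℂ) else 0 := by
    intro i
    rw [MeasureTheory.integral_indicator measurableSet_Icc, integral_exp_Icc]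
  rw [Finset.prod_congr rfl fun i _ => this i]
  by_cases hk : k = 0
  · subst hk
    simp only [Pi.zero_apply, if_true]
    rw [Finset.prod_const]
    push_cast
    simp
  · rw [if_neg hk]
    have : ∃ i, k i ≠ 0 := by
      by_contra hcon
      push_neg at hcon
      exact hk (funext hcon)
    obtain ⟨i, hi⟩ := this
    apply Finset.prod_eq_zero (Finset.mem_univ i)
    rw [if_neg hi]

lemma mem_hyperCross {d N : ℕ} (k : Fin d → ℤ)
    (hk : (∏ i, max |k i| 1) ≤ (N:ℤ)) : k ∈ hyperCross d N := by
  rw [hyperCross, Finset.mem_filter]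
  refine ⟨?_, hk⟩
  rw [Fintype.mem_piFinset]
  intro i
  have h1 : ∀ j : Fin d, (1:ℤ) ≤ max |k j| 1 := fun j => le_max_right _ _
  have h2 : max |k i| 1 ≤ ∏ j, max |k j| 1 := by
    have e1 : (∏ j, (if j = i then max |k i| 1 else 1)) = max |k i| 1 := by
      rw [Finset.prod_ite_eq' Finset.univ i (fun _ => max |k i| 1)]
      simp
    rw [← e1]
    refine Finset.prod_le_prod (fun j _ => ?_) (fun j _ => ?_)
    · split
      · positivity
      · norm_num
    · by_cases hj : j = i
      · subst hj; simp
      · rw [if_neg hj]; exact h1 j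
  have h3 : |k i| ≤ (N:ℤ) := le_trans (le_trans (le_max_left _ _) h2) hk
  rw [Finset.mem_Icc]
  constructor <;> [linarith [neg_abs_le (k i)]; linarith [le_abs_self (k i)]]

lemma Qc_expFun {d N : ℕ} (m : ℕ) (hm : 0 < m) (h : Fin d → ℤ)
    (hex : ∀ f ∈ trigSpace (hyperCross d N),
      (m : ℂ)⁻¹ * ∑ ν ∈ Finset.Icc 1 m, f (korNode m h ν) =
        (((2 * Real.pi) ^ d : ℝ) : ℂ)⁻¹ * ∫ x in cube d, f x)
    (k : Fin d → ℤ) (hk : k ∈ hyperCross d N) :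
    Qc m h (expFun k) = if k = 0 then 1 else 0 := by
  by_cases h0 : k = 0
  · subst h0
    rw [if_pos rfl, Qc]
    have : ∀ ν ∈ Finset.Icc 1 m, expFun (0 : Fin d → ℤ) (korNode m h ν) = 1 := by
      intro ν _
      rw [expFun]
      simp
    rw [Finset.sum_congr rfl this, Finset.sum_const, Nat.card_Icc]
    simp only [nsmul_eq_mul, mul_one]
    rw [show m + 1 - 1 = m from rfl]
    rw [inv_mul_cancel₀ (by exact_mod_cast hm.ne' : (m:ℂ) ≠ 0)]
  · rw [if_neg h0, Qc]
    have hmem : expFun k ∈ trigSpace (hyperCross d N) :=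
      Submodule.subset_span ⟨k, hk, rfl⟩
    rw [hex _ hmem, integral_expFun, if_neg h0, mul_zero]

lemma Qmaster {d : ℕ} (m : ℕ) (h : Fin d → ℤ) (A : Fin d → Finset ℤ) (a : Fin d → ℤ → ℂ)
    (g : Fin d → ℤ → ℤ)
    (H : ∀ p ∈ Fintype.piFinset A, Qc m h (expFun (fun i => g i (p i))) =
      if (fun i => g i (p i)) = 0 then 1 else 0) :
    Qc m h (fun w => ∏ i, ∑ c ∈ A i, a i c *
        Complex.exp (Complex.I * ((g i c : ℤ) : ℂ) * ((w i : ℝ) : ℂ)))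
      = ∑ p ∈ Fintype.piFinset A, (∏ i, a i (p i)) *
          (if (fun i => g i (p i)) = 0 then 1 else 0) := by
  have key : ∀ w : Fin d → ℝ,
      (∏ i, ∑ c ∈ A i, a i c * Complex.exp (Complex.I * ((g i c : ℤ) : ℂ) * ((w i : ℝ) : ℂ)))
        = ∑ p ∈ Fintype.piFinset A, (∏ i, a i (p i)) * expFun (fun i => g i (p i)) w := by
    intro w
    rw [Finset.prod_univ_sum]
    refine Finset.sum_congr rfl fun p hp => ?_
    rw [Finset.prod_mul_distrib, expFun, Finset.mul_sum, Complex.exp_sum]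
    refine congrArg _ (Finset.prod_congr rfl fun i _ => ?_)
    rw [mul_assoc]
  simp only [Qc, key]
  rw [Finset.sum_comm, Finset.mul_sum]
  refine Finset.sum_congr rfl fun p hp => ?_
  rw [← H p hp, Qc, Finset.mul_sum, Finset.mul_sum, Finset.mul_sum]
  refine Finset.sum_congr rfl fun ν hν => ?_
  ring

end Stmt16Aux
namespace Stmt16Aux
open Finset Complex MeasureTheory

lemma korNode_mem_cube {d : ℕ} (m : ℕ) (h : Fin d → ℤ) (ν : ℕ) :
    korNode m h ν ∈ cube d := by
  rw [cube, Set.mem_Icc]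
  constructor
  · intro i
    show (0:ℝ) ≤ 2 * Real.pi * Int.fract ((ν : ℝ) * (h i : ℝ) / (m : ℝ))
    have h1 := Int.fract_nonneg ((ν : ℝ) * (h i : ℝ) / (m : ℝ))
    have h2 := Real.pi_pos
    positivity
  · intro i
    show 2 * Real.pi * Int.fract ((ν : ℝ) * (h i : ℝ) / (m : ℝ)) ≤ 2 * Real.pi
    have h1 := (Int.fract_lt_one ((ν : ℝ) * (h i : ℝ) / (m : ℝ))).le
    have h2 := Int.fract_nonneg ((ν : ℝ) * (h i : ℝ) / (m : ℝ))
    nlinarith [Real.pi_pos]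

instance cube_nonempty (d : ℕ) : Nonempty (cube d) := by
  refine ⟨⟨0, ?_⟩⟩
  rw [cube, Set.mem_Icc]
  exact ⟨le_refl _, fun i => by simpa using by linarith [Real.pi_pos]⟩

lemma unifNorm_nonneg {d : ℕ} (f : (Fin d → ℝ) → ℂ) : 0 ≤ unifNorm f :=
  Real.iSup_nonneg fun x => norm_nonneg _

lemma unifNorm_le {d : ℕ} (f : (Fin d → ℝ) → ℂ) {C : ℝ} (hC : 0 ≤ C)
    (hb : ∀ x ∈ cube d, ‖f x‖ ≤ C) : unifNorm f ≤ C :=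
  Real.iSup_le (fun x => hb x x.2) hC

lemma le_unifNorm {d : ℕ} {f : (Fin d → ℝ) → ℂ} (hf : Continuous f) {x : Fin d → ℝ}
    (hx : x ∈ cube d) : ‖f x‖ ≤ unifNorm f := by
  have hb : BddAbove (Set.range fun y : cube d => ‖f ↑y‖) := by
    have hcomp : IsCompact (cube d) := isCompact_Icc
    have himg := (hcomp.image (continuous_norm.comp hf)).bddAbove
    rwa [Set.image_eq_range] at himg
  exact le_ciSup hb (⟨x, hx⟩ : cube d)

lemma continuous_of_mem_trigSpace {d : ℕ} {Q : Finset (Fin d → ℤ)}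
    {u : (Fin d → ℝ) → ℂ} (hu : u ∈ trigSpace Q) : Continuous u := by
  induction hu using Submodule.span_induction with
  | mem v hv =>
    obtain ⟨k, _, rfl⟩ := hv
    exact Complex.continuous_exp.comp (continuous_const.mul (continuous_finset_sum _
      fun j _ => continuous_const.mul (Complex.continuous_ofReal.comp (continuous_apply j))))
  | zero => exact continuous_const
  | add v w _ _ hcv hcw => exact hcv.add hcw
  | smul c v _ hcv => exact hcv.const_smul c

end Stmt16Aux
namespace Stmt16Aux
open Finset Complex MeasureTheory

lemma prod_two_js {d : ℕ} (s : Fin d → ℕ) (ℓ : ℕ) (hs : (∑ j, s j) = ℓ) (c : ℤ) :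
    (∏ _i : Fin d, c) * (∏ i : Fin d, ((2:ℤ)^(s i))) = c^d * 2^ℓ := by
  rw [Finset.prod_const, Finset.card_univ, Fintype.card_fin, Finset.prod_pow_eq_pow_sum, hs]

lemma kernel_sum_bound {d N : ℕ} (m : ℕ) (hm : 0 < m) (h : Fin d → ℤ)
    (hex : ∀ f ∈ trigSpace (hyperCross d N),
      (m : ℂ)⁻¹ * ∑ ν ∈ Finset.Icc 1 m, f (korNode m h ν) =
        (((2 * Real.pi) ^ d : ℝ) : ℂ)⁻¹ * ∫ x in cube d, f x)
    (s : Fin d → ℕ) (ℓ : ℕ) (hs : (∑ j, s j) = ℓ)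
    (hN : ((3:ℤ)^d * 2^ℓ) ≤ (N:ℤ)) (x : Fin d → ℝ) :
    (m:ℝ)⁻¹ * ∑ ν ∈ Finset.Icc 1 m,
      ‖vpKd (fun i => 2^(s i)) (x - korNode m h ν)‖ ≤ 3^d := by
  have hjpos : ∀ i : Fin d, 0 < 2^(s i) := fun i => pow_pos (by norm_num) _
  set js : Fin d → ℕ := fun i => 2^(s i) with hjs
  set A : Fin d → Finset ℤ := fun i => Finset.Icc (-(2*(js i):ℤ)+1) ((2*(js i):ℤ)-1) with hA
  set a : Fin d → ℤ → ℂ := fun i c => mcoef (js i) c *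
    Complex.exp (Complex.I * (c:ℂ) * ((x i : ℝ):ℂ)) with ha
  set g : Fin d → ℤ → ℤ := fun _i c => -c with hg
  have hprodA : ∀ p, p ∈ Fintype.piFinset A → (∏ i, max |g i (p i)| 1) ≤ (N:ℤ) := by
    intro p hp
    rw [Fintype.mem_piFinset] at hp
    calc (∏ i, max |g i (p i)| 1) ≤ ∏ i, (2*((js i):ℤ)) := by
          refine Finset.prod_le_prod (fun i _ => by positivity) (fun i _ => ?_)
          have hpi := hp i
          simp only [hA, Finset.mem_Icc] at hpi
          have h1 : |g i (p i)| ≤ 2*((js i):ℤ) := by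
            simp only [hg, abs_neg, abs_le]
            omega
          exact max_le h1 (by have := hjpos i; simp only [hjs]; omega)
      _ = 2^d * 2^ℓ := by
          rw [Finset.prod_mul_distrib]
          have : (∏ i : Fin d, ((js i):ℤ)) = ∏ i : Fin d, ((2:ℤ)^(s i)) := by
            refine Finset.prod_congr rfl fun i _ => ?_
            simp only [hjs]
            push_cast
            rfl
          rw [this, prod_two_js s ℓ hs 2]
      _ ≤ 3^d * 2^ℓ := by
          have h23 : (2:ℤ)^d ≤ 3^d := pow_le_pow_left₀ (by norm_num) (by norm_num) d
          have h2l : (0:ℤ) < 2^ℓ := pow_pos (by norm_num) ℓ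
          nlinarith
      _ ≤ (N:ℤ) := hN
  have H : ∀ p ∈ Fintype.piFinset A,
      Qc m h (expFun (fun i => g i (p i))) = if (fun i => g i (p i)) = 0 then 1 else 0 :=
    fun p hp => Qc_expFun m hm h hex _ (mem_hyperCross _ (hprodA p hp))
  have hfun : (fun w : Fin d → ℝ => ∏ i, Mc (js i) (x i - w i))
      = fun w => ∏ i, ∑ c ∈ A i, a i c *
          Complex.exp (Complex.I * ((g i c : ℤ):ℂ) * ((w i : ℝ):ℂ)) := by
    funext w
    refine Finset.prod_congr rfl fun i _ => ?_
    rw [Mc_coef]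
    refine Finset.sum_congr rfl fun c hc => ?_
    simp only [ha, hg]
    rw [mul_assoc (mcoef (js i) c), ← Complex.exp_add]
    congr 2
    push_cast
    ring
  have h0mem : (0 : Fin d → ℤ) ∈ Fintype.piFinset A := by
    rw [Fintype.mem_piFinset]
    intro i
    simp only [hA, Finset.mem_Icc, Pi.zero_apply]
    have := hjpos i
    simp only [hjs]
    omega
  have hside : ∀ p ∈ Fintype.piFinset A, p ≠ 0 →
      (∏ i, a i (p i)) * (if (fun i => g i (p i)) = 0 then 1 else 0) = 0 := by
    intro p _ hne
    rw [if_neg, mul_zero]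
    intro hcon
    apply hne
    funext i
    have hci := congrFun hcon i
    simp only [hg, Pi.zero_apply, neg_eq_zero] at hci
    exact hci
  have hQ : Qc m h (fun w => ∏ i, Mc (js i) (x i - w i)) = 3^d := by
    rw [hfun, Qmaster m h A a g H, Finset.sum_eq_single_of_mem 0 h0mem hside]
    have hcond : ((fun i => g i ((0 : Fin d → ℤ) i)) = 0) := by
      funext i
      simp [hg]
    rw [if_pos hcond, mul_one]
    have hval : ∀ i : Fin d, a i ((0 : Fin d → ℤ) i) = 3 := by
      intro i
      simp only [ha, Pi.zero_apply, Int.cast_zero, mul_zero, zero_mul, Complex.exp_zero, mul_one]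
      exact mcoef_zero (hjpos i)
    rw [Finset.prod_congr rfl fun i _ => hval i, Finset.prod_const, Finset.card_univ,
      Fintype.card_fin]
  have hreal : (m:ℝ)⁻¹ * ∑ ν ∈ Finset.Icc 1 m, ∏ i, Mre (js i) (x i - korNode m h ν i)
      = 3^d := by
    have hcast : ((((m:ℝ)⁻¹ * ∑ ν ∈ Finset.Icc 1 m,
          ∏ i, Mre (js i) (x i - korNode m h ν i)) : ℝ) : ℂ)
        = Qc m h (fun w => ∏ i, Mc (js i) (x i - w i)) := by
      rw [Qc]
      push_cast
      refine congrArg _ (Finset.sum_congr rfl fun ν _ => ?_)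
      exact Finset.prod_congr rfl fun i _ => (Mc_eq_Mre _ _).symm
    rw [hQ] at hcast
    exact_mod_cast hcast
  rw [← hreal]
  refine mul_le_mul_of_nonneg_left ?_ (by positivity)
  refine Finset.sum_le_sum fun ν _ => ?_
  rw [vpKd, norm_prod]
  refine Finset.prod_le_prod (fun i _ => norm_nonneg _) (fun i _ => ?_)
  simp only [Pi.sub_apply]
  exact norm_vpK_le _ _

end Stmt16Aux
namespace Stmt16Aux
open Finset Complex MeasureTheory

lemma korV_expFun {d N : ℕ} (m : ℕ) (hm : 0 < m) (h : Fin d → ℤ)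
    (hex : ∀ f ∈ trigSpace (hyperCross d N),
      (m : ℂ)⁻¹ * ∑ ν ∈ Finset.Icc 1 m, f (korNode m h ν) =
        (((2 * Real.pi) ^ d : ℝ) : ℂ)⁻¹ * ∫ x in cube d, f x)
    (s : Fin d → ℕ) (ℓ : ℕ) (hs : (∑ j, s j) = ℓ)
    (hN : ((3:ℤ)^d * 2^ℓ) ≤ (N:ℤ))
    (k : Fin d → ℤ) (hk : k ∈ Rbox s) (x : Fin d → ℝ) :
    korV m h s (expFun k) x = expFun k x := by
  have hjpos : ∀ i : Fin d, 0 < 2^(s i) := fun i => pow_pos (by norm_num) _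
  have hkb : ∀ i, -(((2^(s i):ℕ)):ℤ) < k i ∧ k i < ((2^(s i):ℕ):ℤ) := by
    intro i
    rw [Rbox, Fintype.mem_piFinset] at hk
    have h2 := hk i
    rw [Finset.mem_Ioo] at h2
    push_cast
    exact h2
  set js : Fin d → ℕ := fun i => 2^(s i) with hjs
  set A : Fin d → Finset ℤ := fun i => Finset.Icc (-(2*(js i):ℤ)+1) ((2*(js i):ℤ)-1) with hA
  set a : Fin d → ℤ → ℂ := fun i c => bcoef (js i) c *
    Complex.exp (Complex.I * (c:ℂ) * ((x i : ℝ):ℂ)) with ha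
  set g : Fin d → ℤ → ℤ := fun i c => k i - c with hg
  have hprodA : ∀ p, p ∈ Fintype.piFinset A → (∏ i, max |g i (p i)| 1) ≤ (N:ℤ) := by
    intro p hp
    rw [Fintype.mem_piFinset] at hp
    calc (∏ i, max |g i (p i)| 1) ≤ ∏ i, (3*((js i):ℤ)) := by
          refine Finset.prod_le_prod (fun i _ => by positivity) (fun i _ => ?_)
          have hpi := hp i
          simp only [hA, Finset.mem_Icc] at hpi
          have hki := hkb i
          have h1 : |g i (p i)| ≤ 3*((js i):ℤ) := by
            simp only [hg, abs_le]
            simp only [hjs] at hpi ⊢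
            omega
          exact max_le h1 (by have := hjpos i; simp only [hjs]; omega)
      _ = 3^d * 2^ℓ := by
          rw [Finset.prod_mul_distrib]
          have : (∏ i : Fin d, ((js i):ℤ)) = ∏ i : Fin d, ((2:ℤ)^(s i)) := by
            refine Finset.prod_congr rfl fun i _ => ?_
            simp only [hjs]
            push_cast
            rfl
          rw [this, prod_two_js s ℓ hs 3]
      _ ≤ (N:ℤ) := hN
  have H : ∀ p ∈ Fintype.piFinset A,
      Qc m h (expFun (fun i => g i (p i))) = if (fun i => g i (p i)) = 0 then 1 else 0 :=
    fun p hp => Qc_expFun m hm h hex _ (mem_hyperCross _ (hprodA p hp))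
  have hfun : (fun w : Fin d → ℝ => expFun k w * vpKd js (x - w))
      = fun w => ∏ i, ∑ c ∈ A i, a i c *
          Complex.exp (Complex.I * ((g i c : ℤ):ℂ) * ((w i : ℝ):ℂ)) := by
    funext w
    rw [expFun, vpKd, Finset.mul_sum, Complex.exp_sum, ← Finset.prod_mul_distrib]
    refine Finset.prod_congr rfl fun i _ => ?_
    simp only [Pi.sub_apply]
    rw [vpK_coef, Finset.mul_sum]
    refine Finset.sum_congr rfl fun c hc => ?_
    simp only [ha, hg]
    calc Complex.exp (Complex.I * ((k i:ℂ) * (w i:ℂ))) *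
          (bcoef (js i) c * Complex.exp (Complex.I * (c:ℂ) * ((x i - w i : ℝ):ℂ)))
        = bcoef (js i) c * Complex.exp (Complex.I * ((k i:ℂ) * (w i:ℂ))
            + Complex.I * (c:ℂ) * ((x i - w i : ℝ):ℂ)) := by
          rw [Complex.exp_add]; ring
      _ = bcoef (js i) c * (Complex.exp (Complex.I * (c:ℂ) * ((x i:ℝ):ℂ))
            * Complex.exp (Complex.I * (((k i - c : ℤ)):ℂ) * ((w i:ℝ):ℂ))) := by
          rw [← Complex.exp_add]
          congr 2
          push_cast
          ring
      _ = bcoef (js i) c * Complex.exp (Complex.I * (c:ℂ) * ((x i:ℝ):ℂ))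
            * Complex.exp (Complex.I * (((k i - c : ℤ)):ℂ) * ((w i:ℝ):ℂ)) := by
          rw [← mul_assoc]
  have hkmem : k ∈ Fintype.piFinset A := by
    rw [Fintype.mem_piFinset]
    intro i
    simp only [hA, Finset.mem_Icc]
    have := hkb i
    have := hjpos i
    simp only [hjs]
    omega
  have hside : ∀ p ∈ Fintype.piFinset A, p ≠ k →
      (∏ i, a i (p i)) * (if (fun i => g i (p i)) = 0 then 1 else 0) = 0 := by
    intro p _ hne
    rw [if_neg, mul_zero]
    intro hcon
    apply hne
    funext i
    have hci := congrFun hcon i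
    simp only [hg, Pi.zero_apply, sub_eq_zero] at hci
    omega
  have : Qc m h (fun w => expFun k w * vpKd js (x - w)) = expFun k x := by
    rw [hfun, Qmaster m h A a g H, Finset.sum_eq_single_of_mem k hkmem hside]
    have hcond : ((fun i => g i (k i)) = 0) := by
      funext i
      simp [hg]
    rw [if_pos hcond, mul_one]
    have hval : ∀ i : Fin d, a i (k i) =
        Complex.exp (Complex.I * ((k i:ℤ):ℂ) * ((x i:ℝ):ℂ)) := by
      intro i
      simp only [ha]
      rw [bcoef_one (hjpos i) (by have := hkb i; omega), one_mul]
    rw [Finset.prod_congr rfl fun i _ => hval i, expFun, Finset.mul_sum, Complex.exp_sum]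
    refine Finset.prod_congr rfl fun i _ => ?_
    rw [mul_assoc]
  exact this

lemma korV_add {d : ℕ} (m : ℕ) (h : Fin d → ℤ) (s : Fin d → ℕ)
    (f g : (Fin d → ℝ) → ℂ) (x : Fin d → ℝ) :
    korV m h s (f + g) x = korV m h s f x + korV m h s g x := by
  simp only [korV, Pi.add_apply, add_mul, Finset.sum_add_distrib, mul_add]

lemma korV_smul {d : ℕ} (m : ℕ) (h : Fin d → ℤ) (s : Fin d → ℕ)
    (c : ℂ) (f : (Fin d → ℝ) → ℂ) (x : Fin d → ℝ) :
    korV m h s (c • f) x = c * korV m h s f x := by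
  simp only [korV, Pi.smul_apply, smul_eq_mul, Finset.mul_sum]
  refine Finset.sum_congr rfl fun ν _ => ?_
  ring

lemma korV_sub {d : ℕ} (m : ℕ) (h : Fin d → ℤ) (s : Fin d → ℕ)
    (f g : (Fin d → ℝ) → ℂ) (x : Fin d → ℝ) :
    korV m h s (f - g) x = korV m h s f x - korV m h s g x := by
  simp only [korV, Pi.sub_apply, sub_mul, Finset.sum_sub_distrib, mul_sub]

lemma korV_reproduce {d N : ℕ} (m : ℕ) (hm : 0 < m) (h : Fin d → ℤ)
    (hex : ∀ f ∈ trigSpace (hyperCross d N),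
      (m : ℂ)⁻¹ * ∑ ν ∈ Finset.Icc 1 m, f (korNode m h ν) =
        (((2 * Real.pi) ^ d : ℝ) : ℂ)⁻¹ * ∫ x in cube d, f x)
    (s : Fin d → ℕ) (ℓ : ℕ) (hs : (∑ j, s j) = ℓ)
    (hN : ((3:ℤ)^d * 2^ℓ) ≤ (N:ℤ))
    (u : (Fin d → ℝ) → ℂ) (hu : u ∈ trigSpace (Rbox s)) (x : Fin d → ℝ) :
    korV m h s u x = u x := by
  induction hu using Submodule.span_induction with
  | mem v hv =>
    obtain ⟨k, hk, rfl⟩ := hv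
    exact korV_expFun m hm h hex s ℓ hs hN k hk x
  | zero =>
    simp [korV]
  | add v w _ _ hcv hcw =>
    rw [korV_add, hcv, hcw, Pi.add_apply]
  | smul c v _ hcv =>
    rw [korV_smul, hcv, Pi.smul_apply, smul_eq_mul]

end Stmt16Aux
/-- Lebesgue-type inequality for the universal Korobov recovery
algorithm `V^ℓ` (Proposition CP1). -/
theorem stmt16 (d m N : ℕ) (hd : 0 < d) (hm : 0 < m) (h : Fin d → ℤ)
    (hex : ∀ f ∈ trigSpace (hyperCross d N),
      (m : ℂ)⁻¹ * ∑ ν ∈ Finset.Icc 1 m, f (korNode m h ν) =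
        (((2 * Real.pi) ^ d : ℝ) : ℂ)⁻¹ * ∫ x in cube d, f x)
    (ℓ : ℕ) (hℓ : IsGreatest {k : ℕ | (2 : ℝ) ^ k ≤ ((3 : ℝ) ^ d)⁻¹ * N} ℓ)
    (f : (Fin d → ℝ) → ℂ) (hf : Continuous f) (hper : Periodic2Pi f) :
    (⨅ s : {s : Fin d → ℕ // (∑ j, s j) = ℓ}, unifNorm (f - korV m h s f)) ≤
      (3 ^ d + 1) *
        ⨅ s : {s : Fin d → ℕ // (∑ j, s j) = ℓ}, distT f (Rbox (s : Fin d → ℕ)) := by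
  classical
  have hc : (0:ℝ) < 3^d + 1 := by positivity
  have hNr : ((3:ℝ)^d) * 2^ℓ ≤ N := by
    have h1 := hℓ.1
    have h3 : (0:ℝ) < 3^d := by positivity
    calc (3:ℝ)^d * 2^ℓ ≤ 3^d * ((3^d)⁻¹ * N) := mul_le_mul_of_nonneg_left h1 h3.le
      _ = N := by field_simp
  have hN : ((3:ℤ)^d * 2^ℓ) ≤ (N:ℤ) := by exact_mod_cast hNr
  have hne : Nonempty {s : Fin d → ℕ // (∑ j, s j) = ℓ} := by
    refine ⟨⟨fun i => if i = ⟨0, hd⟩ then ℓ else 0, ?_⟩⟩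
    simp
  have key : ∀ s : {s : Fin d → ℕ // (∑ j, s j) = ℓ},
      unifNorm (f - korV m h (s : Fin d → ℕ) f) ≤
        (3^d+1) * distT f (Rbox (s : Fin d → ℕ)) := by
    rintro ⟨s, hs⟩
    show unifNorm (f - korV m h s f) ≤ (3^d+1) * distT f (Rbox s)
    have key2 : ∀ u : (trigSpace (Rbox s)), unifNorm (f - korV m h s f) ≤
        (3^d+1) * unifNorm (f - (u : (Fin d → ℝ) → ℂ)) := by
      intro u
      have hu : (u : (Fin d → ℝ) → ℂ) ∈ trigSpace (Rbox s) := u.2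
      have hcu : Continuous (u : (Fin d → ℝ) → ℂ) := Stmt16Aux.continuous_of_mem_trigSpace hu
      have hgc : Continuous (f - (u : (Fin d → ℝ) → ℂ)) := hf.sub hcu
      set G := f - (u : (Fin d → ℝ) → ℂ) with hG
      have hGnn := Stmt16Aux.unifNorm_nonneg G
      refine Stmt16Aux.unifNorm_le _ (mul_nonneg (by positivity) hGnn) ?_
      intro x hx
      have hrepr : korV m h s (u : (Fin d → ℝ) → ℂ) x = (u : (Fin d → ℝ) → ℂ) x :=
        Stmt16Aux.korV_reproduce m hm h hex s ℓ hs hN _ hu x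
      have hsub : (f - korV m h s f) x = G x - korV m h s G x := by
        rw [hG, Stmt16Aux.korV_sub m h s f (u : (Fin d → ℝ) → ℂ) x, hrepr]
        simp only [Pi.sub_apply]
        ring
      rw [hsub]
      have hb1 : ‖G x‖ ≤ unifNorm G := Stmt16Aux.le_unifNorm hgc hx
      have hb2 : ‖korV m h s G x‖ ≤ 3^d * unifNorm G := by
        have hstep : ‖∑ ν ∈ Finset.Icc 1 m,
            G (korNode m h ν) * vpKd (fun i => 2^(s i)) (x - korNode m h ν)‖
            ≤ ∑ ν ∈ Finset.Icc 1 m, unifNorm G *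
              ‖vpKd (fun i => 2^(s i)) (x - korNode m h ν)‖ := by
          refine le_trans (norm_sum_le _ _) (Finset.sum_le_sum fun ν _ => ?_)
          rw [norm_mul]
          exact mul_le_mul_of_nonneg_right (Stmt16Aux.le_unifNorm hgc (Stmt16Aux.korNode_mem_cube m h ν))
            (norm_nonneg _)
        have hmain : ‖korV m h s G x‖ ≤ (m:ℝ)⁻¹ * ∑ ν ∈ Finset.Icc 1 m,
            unifNorm G * ‖vpKd (fun i => 2^(s i)) (x - korNode m h ν)‖ := by
          rw [korV, norm_mul, norm_inv, Complex.norm_natCast]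
          exact mul_le_mul_of_nonneg_left hstep (by positivity)
        refine le_trans hmain ?_
        have heq : (m:ℝ)⁻¹ * ∑ ν ∈ Finset.Icc 1 m, unifNorm G *
            ‖vpKd (fun i => 2^(s i)) (x - korNode m h ν)‖
            = unifNorm G * ((m:ℝ)⁻¹ * ∑ ν ∈ Finset.Icc 1 m,
              ‖vpKd (fun i => 2^(s i)) (x - korNode m h ν)‖) := by
          rw [← Finset.mul_sum]
          ring
        rw [heq]
        calc unifNorm G * ((m:ℝ)⁻¹ * ∑ ν ∈ Finset.Icc 1 m,
              ‖vpKd (fun i => 2^(s i)) (x - korNode m h ν)‖)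
            ≤ unifNorm G * 3^d :=
              mul_le_mul_of_nonneg_left (Stmt16Aux.kernel_sum_bound m hm h hex s ℓ hs hN x) hGnn
          _ = 3^d * unifNorm G := mul_comm _ _
      calc ‖G x - korV m h s G x‖
          ≤ ‖G x‖ + ‖korV m h s G x‖ := norm_sub_le _ _
        _ ≤ unifNorm G + 3^d * unifNorm G := add_le_add hb1 hb2
        _ = (3^d+1) * unifNorm G := by ring
    have h1 : unifNorm (f - korV m h s f) / (3^d+1) ≤ distT f (Rbox s) := by
      rw [distT]
      refine le_ciInf fun u => ?_
      rw [div_le_iff₀ hc]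
      calc unifNorm (f - korV m h s f) ≤ (3^d+1) * unifNorm (f - (u : (Fin d → ℝ) → ℂ)) :=
            key2 u
        _ = unifNorm (f - (u : (Fin d → ℝ) → ℂ)) * (3^d+1) := mul_comm _ _
    calc unifNorm (f - korV m h s f)
        = (unifNorm (f - korV m h s f)/(3^d+1)) * (3^d+1) := by field_simp
      _ ≤ distT f (Rbox s) * (3^d+1) := mul_le_mul_of_nonneg_right h1 hc.le
      _ = (3^d+1) * distT f (Rbox s) := mul_comm _ _
  have hbdd : BddBelow (Set.range fun s : {s : Fin d → ℕ // (∑ j, s j) = ℓ} =>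
      unifNorm (f - korV m h (s : Fin d → ℕ) f)) := by
    refine ⟨0, ?_⟩
    rintro r ⟨s, rfl⟩
    exact Stmt16Aux.unifNorm_nonneg _
  have h2 : ∀ s : {s : Fin d → ℕ // (∑ j, s j) = ℓ},
      (⨅ s' : {s : Fin d → ℕ // (∑ j, s j) = ℓ},
        unifNorm (f - korV m h (s' : Fin d → ℕ) f)) / (3^d+1) ≤
        distT f (Rbox (s : Fin d → ℕ)) := by
    intro s
    rw [div_le_iff₀ hc]
    calc (⨅ s' : {s : Fin d → ℕ // (∑ j, s j) = ℓ},
          unifNorm (f - korV m h (s' : Fin d → ℕ) f))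
        ≤ unifNorm (f - korV m h (s : Fin d → ℕ) f) := ciInf_le hbdd s
      _ ≤ (3^d+1) * distT f (Rbox (s : Fin d → ℕ)) := key s
      _ = distT f (Rbox (s : Fin d → ℕ)) * (3^d+1) := mul_comm _ _
  have h3 := le_ciInf h2
  calc (⨅ s : {s : Fin d → ℕ // (∑ j, s j) = ℓ}, unifNorm (f - korV m h (s : Fin d → ℕ) f))
      = ((⨅ s : {s : Fin d → ℕ // (∑ j, s j) = ℓ},
          unifNorm (f - korV m h (s : Fin d → ℕ) f))/(3^d+1)) * (3^d+1) := by field_simp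
    _ ≤ (⨅ s : {s : Fin d → ℕ // (∑ j, s j) = ℓ}, distT f (Rbox (s : Fin d → ℕ))) * (3^d+1) :=
        mul_le_mul_of_nonneg_right h3 hc.le
    _ = (3^d+1) * ⨅ s : {s : Fin d → ℕ // (∑ j, s j) = ℓ}, distT f (Rbox (s : Fin d → ℕ)) :=
        mul_comm _ _
end
end
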